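/- If P is a full-dimensional perfectly centered polytope in ℝ^d, then its Nesterov rounding P + P* is also a full-dimensional perfectly centered polytope. -/

import Mathlib

open Pointwise RealInnerProductSpace

noncomputable section

abbrev E (d : ℕ) : Type := EuclideanSpace ℝ (Fin d)

def IsPolytope {d : ℕ} (P : Set (E d)) : Prop :=
  ∃ V : Finset (E d), V.Nonempty ∧ P = convexHull ℝ (V : Set (E d))

def maximizers {d : ℕ} (P : Set (E d)) (c : E d) : Set (E d) :=
  {x ∈ P | ∀ y ∈ P, ⟪y, c⟫ ≤ ⟪x, c⟫}

def IsFace {d : ℕ} (P F : Set (E d)) : Prop :=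
  F = ∅ ∨ F = P ∨ ∃ c : E d, c ≠ 0 ∧ F = maximizers P c

def IsNontrivialFace {d : ℕ} (P F : Set (E d)) : Prop :=
  IsFace P F ∧ F ≠ ∅ ∧ F ≠ P

def polarDual {d : ℕ} (P : Set (E d)) : Set (E d) :=
  {x | ∀ y ∈ P, ⟪x, y⟫ ≤ 1}

def dualFace {d : ℕ} (P F : Set (E d)) : Set (E d) :=
  {x ∈ polarDual P | ∀ f ∈ F, ⟪x, f⟫ = 1}

def normalCone {d : ℕ} (P F : Set (E d)) : Set (E d) :=
  {c | maximizers P c = F}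

def IsPerfectlyCentered {d : ℕ} (P : Set (E d)) : Prop :=
  ∀ F : Set (E d), IsFace P F → F.Nonempty →
    (intrinsicInterior ℝ F ∩ normalCone P F).Nonempty

def dimSet {d : ℕ} (F : Set (E d)) : ℕ :=
  Module.finrank ℝ (affineSpan ℝ F).direction

def fVec {d : ℕ} (P : Set (E d)) (k : ℕ) : ℕ :=
  {F : Set (E d) | IsFace P F ∧ F.Nonempty ∧ dimSet F = k}.ncard

/-! ### Auxiliary development -/

open Set Finset

open scoped Classical

variable {d : ℕ}

def vSup (W : Finset (E d)) (hW : W.Nonempty) (c : E d) : ℝ := W.sup' hW fun w => ⟪w, c⟫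

def vArg (W : Finset (E d)) (hW : W.Nonempty) (c : E d) : Finset (E d) :=
  W.filter fun w => ⟪w, c⟫ = vSup W hW c

lemma mem_maximizers_iff {K : Set (E d)} {c x : E d} :
    x ∈ maximizers K c ↔ x ∈ K ∧ ∀ y ∈ K, ⟪y, c⟫ ≤ ⟪x, c⟫ := Iff.rfl

lemma maximizers_subset (K : Set (E d)) (c : E d) : maximizers K c ⊆ K := fun _ hx => hx.1

lemma maximizers_zero (K : Set (E d)) : maximizers K 0 = K := by
  ext x; simp [maximizers]

lemma maximizers_smul_pos (K : Set (E d)) (c : E d) {t : ℝ} (ht : 0 < t) :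
    maximizers K (t • c) = maximizers K c := by
  ext x
  simp only [mem_maximizers_iff, real_inner_smul_right]
  exact and_congr_right fun _ => forall₂_congr fun y _ => by
    constructor
    · intro h; exact le_of_mul_le_mul_left h ht
    · intro h; exact mul_le_mul_of_nonneg_left h ht.le

lemma maximizers_convexSet {K : Set (E d)} (hK : Convex ℝ K) (c : E d) :
    Convex ℝ (maximizers K c) := by
  intro x hx y hy a b ha hb hab
  refine ⟨hK hx.1 hy.1 ha hb hab, fun z hz => ?_⟩
  have h1 := hx.2 z hz
  have h2 := hy.2 z hz
  have : ⟪a • x + b • y, c⟫ = a * ⟪x, c⟫ + b * ⟪y, c⟫ := by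
    rw [inner_add_left, real_inner_smul_left, real_inner_smul_left]
  rw [this]
  calc ⟪z, c⟫ = a * ⟪z, c⟫ + b * ⟪z, c⟫ := by rw [← add_mul, hab, one_mul]
  _ ≤ a * ⟪x, c⟫ + b * ⟪y, c⟫ :=
    add_le_add (mul_le_mul_of_nonneg_left h1 ha) (mul_le_mul_of_nonneg_left h2 hb)

lemma maximizers_nonempty {K : Set (E d)} (hK : IsCompact K) (hne : K.Nonempty) (c : E d) :
    (maximizers K c).Nonempty := by
  obtain ⟨x, hxK, hmax⟩ := hK.exists_isMaxOn hne
    ((continuous_id.inner continuous_const).continuousOn : ContinuousOn (fun y : E d => ⟪y, c⟫) K)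
  exact ⟨x, hxK, fun y hy => hmax hy⟩

lemma maximizers_add (A B : Set (E d)) (c : E d) :
    maximizers (A + B) c = maximizers A c + maximizers B c := by
  ext x
  constructor
  · rintro ⟨hx, hmax⟩
    obtain ⟨a, ha, b, hb, rfl⟩ := hx
    refine ⟨a, ⟨ha, fun y hy => ?_⟩, b, ⟨hb, fun y hy => ?_⟩, rfl⟩
    · have := hmax (y + b) (Set.add_mem_add hy hb)
      rw [inner_add_left, inner_add_left] at this
      linarith
    · have := hmax (a + y) (Set.add_mem_add ha hy)
      rw [inner_add_left, inner_add_left] at this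
      linarith
  · rintro ⟨a, ha, b, hb, rfl⟩
    refine ⟨Set.add_mem_add ha.1 hb.1, fun y hy => ?_⟩
    obtain ⟨y1, hy1, y2, hy2, rfl⟩ := hy
    rw [inner_add_left, inner_add_left]
    exact add_le_add (ha.2 y1 hy1) (hb.2 y2 hy2)

lemma vArg_nonempty (W : Finset (E d)) (hW : W.Nonempty) (c : E d) : (vArg W hW c).Nonempty := by
  obtain ⟨w, hw, hsup⟩ := Finset.exists_mem_eq_sup' hW fun w => ⟪w, c⟫
  exact ⟨w, Finset.mem_filter.2 ⟨hw, hsup.symm⟩⟩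

lemma vArg_subset (W : Finset (E d)) (hW : W.Nonempty) (c : E d) : vArg W hW c ⊆ W :=
  Finset.filter_subset _ _

lemma mem_vArg_iff {W : Finset (E d)} {hW : W.Nonempty} {c w : E d} :
    w ∈ vArg W hW c ↔ w ∈ W ∧ ⟪w, c⟫ = vSup W hW c := Finset.mem_filter

lemma inner_isLinearMap (c : E d) : IsLinearMap ℝ (fun x : E d => ⟪x, c⟫) :=
  ⟨fun a b => inner_add_left a b c, fun t a => real_inner_smul_left a c t⟩

lemma inner_le_vSup {W : Finset (E d)} (hW : W.Nonempty) {c p : E d}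
    (hp : p ∈ convexHull ℝ (W : Set (E d))) : ⟪p, c⟫ ≤ vSup W hW c := by
  have := convexHull_min (fun w hw => ?_) (convex_halfSpace_le (inner_isLinearMap c) (vSup W hW c)) hp
  · exact this
  · exact Finset.le_sup' (f := fun w => ⟪w, c⟫) (Finset.mem_coe.1 hw)

lemma inner_eq_on_convexHull {W : Finset (E d)} {c p : E d} {r : ℝ}
    (h : ∀ w ∈ W, ⟪w, c⟫ = r) (hp : p ∈ convexHull ℝ (W : Set (E d))) : ⟪p, c⟫ = r := by
  have := convexHull_min (fun w hw => h w (Finset.mem_coe.1 hw))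
    (convex_hyperplane (inner_isLinearMap c) r) hp
  exact this

lemma maximizers_convexHull (W : Finset (E d)) (hW : W.Nonempty) (c : E d) :
    maximizers (convexHull ℝ (W : Set (E d))) c
      = convexHull ℝ ((vArg W hW c : Finset (E d)) : Set (E d)) := by
  obtain ⟨w₀, hw₀⟩ := vArg_nonempty W hW c
  have hw₀W := vArg_subset W hW c hw₀
  have hw₀v : ⟪w₀, c⟫ = vSup W hW c := (mem_vArg_iff.1 hw₀).2
  apply Set.Subset.antisymm
  · rintro x ⟨hxK, hmax⟩
    have hxM : ⟪x, c⟫ = vSup W hW c := by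
      refine le_antisymm (inner_le_vSup hW hxK) ?_
      rw [← hw₀v]
      exact hmax w₀ (subset_convexHull ℝ _ (Finset.mem_coe.2 hw₀W))
    rw [Finset.convexHull_eq] at hxK
    obtain ⟨μ, hμ0, hμ1, hx⟩ := hxK
    have hzero : ∀ w ∈ W, w ∉ vArg W hW c → μ w = 0 := by
      intro w₁ hw₁ hnot
      by_contra hne
      have hpos : 0 < μ w₁ := lt_of_le_of_ne (hμ0 w₁ hw₁) (Ne.symm hne)
      have hlt : ⟪w₁, c⟫ < vSup W hW c := by
        refine lt_of_le_of_ne (Finset.le_sup' (f := fun w => ⟪w, c⟫) hw₁) ?_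
        intro he; exact hnot (mem_vArg_iff.2 ⟨hw₁, he⟩)
      have hxsum : ⟪x, c⟫ = ∑ w ∈ W, μ w * ⟪w, c⟫ := by
        rw [← hx, Finset.centerMass_eq_of_sum_1 _ id hμ1, sum_inner]
        exact Finset.sum_congr rfl fun w _ => real_inner_smul_left _ _ _
      have hstrict : ∑ w ∈ W, μ w * ⟪w, c⟫ < ∑ w ∈ W, μ w * vSup W hW c := by
        refine Finset.sum_lt_sum (fun w hw => mul_le_mul_of_nonneg_left
          (Finset.le_sup' (f := fun w => ⟪w, c⟫) hw) (hμ0 w hw)) ⟨w₁, hw₁, ?_⟩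
        exact mul_lt_mul_of_pos_left hlt hpos
      rw [← Finset.sum_mul, hμ1, one_mul] at hstrict
      rw [hxsum] at hxM
      exact absurd hxM (ne_of_lt hstrict)
    have hsum' : ∑ w ∈ vArg W hW c, μ w = 1 := by
      rw [← hμ1]
      exact (Finset.sum_subset (vArg_subset W hW c) hzero)
    have hcm : (vArg W hW c).centerMass μ id = x := by
      rw [Finset.centerMass_subset id (vArg_subset W hW c) hzero]
      exact hx
    rw [← hcm]
    exact Finset.centerMass_mem_convexHull _ (fun i hi => hμ0 i (vArg_subset W hW c hi))
      (by rw [hsum']; exact one_pos) (fun i hi => Finset.mem_coe.2 hi)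
  · intro x hx
    have hxW : x ∈ convexHull ℝ (W : Set (E d)) :=
      convexHull_mono (Finset.coe_subset.2 (vArg_subset W hW c)) hx
    have hxM : ⟪x, c⟫ = vSup W hW c :=
      inner_eq_on_convexHull (fun w hw => (mem_vArg_iff.1 hw).2) hx
    exact ⟨hxW, fun y hy => by rw [hxM]; exact inner_le_vSup hW hy⟩

lemma mem_maximizers_convexHull_iff (W : Finset (E d)) (hW : W.Nonempty) (c : E d) {x : E d} :
    x ∈ maximizers (convexHull ℝ (W : Set (E d))) c ↔
      x ∈ convexHull ℝ (W : Set (E d)) ∧ ⟪x, c⟫ = vSup W hW c := by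
  constructor
  · intro hx
    obtain ⟨w₀, hw₀⟩ := vArg_nonempty W hW c
    refine ⟨hx.1, le_antisymm (inner_le_vSup hW hx.1) ?_⟩
    rw [← (mem_vArg_iff.1 hw₀).2]
    exact hx.2 w₀ (subset_convexHull ℝ _ (Finset.mem_coe.2 (vArg_subset W hW c hw₀)))
  · rintro ⟨hxK, hxM⟩
    exact ⟨hxK, fun y hy => by rw [hxM]; exact inner_le_vSup hW hy⟩

lemma exists_mem_eq_vSup (W : Finset (E d)) (hW : W.Nonempty) (c : E d) :
    ∃ w, w ∈ W ∧ vSup W hW c = ⟪w, c⟫ :=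
  Finset.exists_mem_eq_sup' hW fun w => ⟪w, c⟫

lemma vSup_le_iff {W : Finset (E d)} {hW : W.Nonempty} {c : E d} {r : ℝ} :
    vSup W hW c ≤ r ↔ ∀ w ∈ W, ⟪w, c⟫ ≤ r := Finset.sup'_le_iff hW _

lemma le_vSup {W : Finset (E d)} {hW : W.Nonempty} {c w : E d} (hw : w ∈ W) :
    ⟪w, c⟫ ≤ vSup W hW c := Finset.le_sup' (f := fun w => ⟪w, c⟫) hw

lemma vArg_perturb (W : Finset (E d)) (hW : W.Nonempty) (c m : E d) :
    ∃ ε₀ > (0:ℝ), ∀ ε : ℝ, 0 < ε → ε ≤ ε₀ →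
      vArg W hW (c + ε • m) = vArg (vArg W hW c) (vArg_nonempty W hW c) m ∧
      vSup W hW (c + ε • m) = vSup W hW c + ε * vSup (vArg W hW c) (vArg_nonempty W hW c) m := by
  set M := vSup W hW c with hM
  set A := vArg W hW c with hA
  have hAne : A.Nonempty := vArg_nonempty W hW c
  set μ := vSup A hAne m with hμ
  set C := W.sup' hW fun w => |⟪w, m⟫| with hC
  have hC0 : 0 ≤ C := by
    obtain ⟨w, hw⟩ := hW
    rw [hC]
    exact le_trans (abs_nonneg _) (Finset.le_sup' (f := fun w => |⟪w, m⟫|) hw)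
  have hCle : ∀ w ∈ W, |⟪w, m⟫| ≤ C := by
    intro w hw; rw [hC]; exact Finset.le_sup' (f := fun w => |⟪w, m⟫|) hw
  -- margin δ
  set δ : ℝ := if h : (W \ A).Nonempty then (W \ A).inf' h (fun w => M - ⟪w, c⟫) else 1 with hδ
  have hgap : ∀ w ∈ W, w ∉ A → δ ≤ M - ⟪w, c⟫ := by
    intro w hw hnA
    have hmem : w ∈ W \ A := Finset.mem_sdiff.2 ⟨hw, hnA⟩
    rw [hδ, dif_pos ⟨w, hmem⟩]
    exact Finset.inf'_le _ hmem
  have hδ0 : 0 < δ := by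
    rw [hδ]
    split_ifs with h
    · obtain ⟨w, hw, he⟩ := Finset.exists_mem_eq_inf' h (fun w => M - ⟪w, c⟫)
      rw [he]
      have hwW : w ∈ W := (Finset.mem_sdiff.1 hw).1
      have hwnA : w ∉ A := (Finset.mem_sdiff.1 hw).2
      have hle : ⟪w, c⟫ ≤ M := Finset.le_sup' (f := fun w => ⟪w, c⟫) hwW
      have hne : ⟪w, c⟫ ≠ M := fun he' => hwnA (mem_vArg_iff.2 ⟨hwW, he'⟩)
      have : ⟪w, c⟫ < M := lt_of_le_of_ne hle hne
      linarith
    · exact one_pos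
  refine ⟨δ / (2 * C + 1), div_pos hδ0 (by linarith), fun ε hε hεle => ?_⟩
  have hμC : -C ≤ μ := by
    obtain ⟨w, hw, he⟩ := exists_mem_eq_vSup A hAne m
    rw [hμ, he]
    exact (abs_le.1 (hCle w (vArg_subset W hW c hw))).1
  -- value function
  have hval : ∀ w : E d, ⟪w, c + ε • m⟫ = ⟪w, c⟫ + ε * ⟪w, m⟫ := by
    intro w; rw [inner_add_right, real_inner_smul_right]
  -- the new sup equals M + ε μ
  have hsupval : vSup W hW (c + ε • m) = M + ε * μ := by
    apply le_antisymm
    · apply Finset.sup'_le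
      intro w hw
      rw [hval]
      by_cases hwA : w ∈ A
      · have h1 : ⟪w, c⟫ = M := (mem_vArg_iff.1 hwA).2
        have h2 : ⟪w, m⟫ ≤ μ := Finset.le_sup' (f := fun w => ⟪w, m⟫) hwA
        nlinarith
      · have h1 : δ ≤ M - ⟪w, c⟫ := hgap w hw hwA
        have h2 : ⟪w, m⟫ ≤ C := (abs_le.1 (hCle w hw)).2
        have h3 : ε * (C - μ) ≤ δ := by
          calc ε * (C - μ) ≤ ε * (2 * C + 1) := by nlinarith
          _ ≤ δ / (2 * C + 1) * (2 * C + 1) := by nlinarith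
          _ = δ := by field_simp
        nlinarith
    · obtain ⟨w, hw, he⟩ := exists_mem_eq_vSup A hAne m
      have h1 : ⟪w, c⟫ = M := (mem_vArg_iff.1 hw).2
      have : ⟪w, c + ε • m⟫ = M + ε * μ := by rw [hval, h1, hμ, he]
      rw [← this]
      exact Finset.le_sup' (f := fun w => ⟪w, c + ε • m⟫) (vArg_subset W hW c hw)
  refine ⟨?_, hsupval⟩
  ext w
  rw [mem_vArg_iff, mem_vArg_iff, hsupval]
  constructor
  · rintro ⟨hwW, hweq⟩
    rw [hval] at hweq
    by_cases hwA : w ∈ A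
    · have h1 : ⟪w, c⟫ = M := (mem_vArg_iff.1 hwA).2
      refine ⟨hwA, ?_⟩
      have : ε * ⟪w, m⟫ = ε * μ := by linarith
      exact mul_left_cancel₀ (ne_of_gt hε) this
    · exfalso
      have h1 : δ ≤ M - ⟪w, c⟫ := hgap w hwW hwA
      have h2 : ⟪w, m⟫ ≤ C := (abs_le.1 (hCle w hwW)).2
      have h3 : ε * (C - μ) < δ := by
        calc ε * (C - μ) ≤ ε * (2 * C) := by nlinarith
        _ ≤ δ / (2 * C + 1) * (2 * C) := by nlinarith
        _ < δ := by
            rw [div_mul_eq_mul_div]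
            rw [div_lt_iff₀ (by linarith : (0:ℝ) < 2 * C + 1)]
            nlinarith
      nlinarith
  · rintro ⟨hwA, hwm⟩
    have h1 : ⟪w, c⟫ = M := (mem_vArg_iff.1 hwA).2
    refine ⟨vArg_subset W hW c hwA, ?_⟩
    rw [hval, h1, hwm]

lemma maximizers_perturb (W : Finset (E d)) (hW : W.Nonempty) (c m : E d) :
    ∃ ε₀ > (0:ℝ), ∀ ε : ℝ, 0 < ε → ε ≤ ε₀ →
      maximizers (convexHull ℝ (W : Set (E d))) (c + ε • m)
        = maximizers (maximizers (convexHull ℝ (W : Set (E d))) c) m := by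
  obtain ⟨ε₀, hε₀, hkey⟩ := vArg_perturb W hW c m
  refine ⟨ε₀, hε₀, fun ε hε hεle => ?_⟩
  rw [maximizers_convexHull W hW (c + ε • m), (hkey ε hε hεle).1,
    maximizers_convexHull W hW c, maximizers_convexHull _ (vArg_nonempty W hW c) m]

lemma mem_intrinsicInterior_iff_ball {s : Set (E d)} {y : E d} :
    y ∈ intrinsicInterior ℝ s ↔
      y ∈ s ∧ ∃ ρ > (0:ℝ), ∀ z ∈ (affineSpan ℝ s : Set (E d)), dist z y < ρ → z ∈ s := by
  constructor
  · intro h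
    refine ⟨intrinsicInterior_subset h, ?_⟩
    obtain ⟨yh, hyh, rfl⟩ := mem_intrinsicInterior.1 h
    obtain ⟨ρ, hρ, hball⟩ := Metric.mem_nhds_iff.1 (mem_interior_iff_mem_nhds.1 hyh)
    refine ⟨ρ, hρ, fun z hz hdist => ?_⟩
    have : (⟨z, hz⟩ : affineSpan ℝ s) ∈ Metric.ball yh ρ := by
      rw [Metric.mem_ball, Subtype.dist_eq]
      exact hdist
    exact hball this
  · rintro ⟨hys, ρ, hρ, hchar⟩
    have hyspan : y ∈ affineSpan ℝ s := subset_affineSpan ℝ s hys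
    refine mem_intrinsicInterior.2 ⟨⟨y, hyspan⟩, ?_, rfl⟩
    rw [mem_interior_iff_mem_nhds]
    refine Metric.mem_nhds_iff.2 ⟨ρ, hρ, fun zh hzh => ?_⟩
    rw [Metric.mem_ball, Subtype.dist_eq] at hzh
    exact hchar ↑zh zh.2 hzh

lemma exists_extension_of_mem_intrinsicInterior {s : Set (E d)} {y z : E d}
    (hy : y ∈ intrinsicInterior ℝ s) (hz : z ∈ s) :
    ∃ ε > (0:ℝ), ∀ ε' : ℝ, 0 < ε' → ε' ≤ ε → y + ε' • (y - z) ∈ s := by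
  obtain ⟨hys, ρ, hρ, hchar⟩ := mem_intrinsicInterior_iff_ball.1 hy
  set D := ‖y - z‖ with hD
  have hD0 : 0 ≤ D := norm_nonneg _
  refine ⟨ρ / (2 * D + 2), by positivity, fun ε' hε' hεle => ?_⟩
  have hmem : y + ε' • (y - z) ∈ (affineSpan ℝ s : Set (E d)) := by
    have h1 : y - z ∈ (affineSpan ℝ s).direction :=
      AffineSubspace.vsub_mem_direction (subset_affineSpan ℝ s hys) (subset_affineSpan ℝ s hz)
    have h2 : ε' • (y - z) ∈ (affineSpan ℝ s).direction := Submodule.smul_mem _ _ h1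
    have := AffineSubspace.vadd_mem_of_mem_direction h2 (subset_affineSpan ℝ s hys)
    simpa [vadd_eq_add, add_comm] using this
  refine hchar _ hmem ?_
  have : dist (y + ε' • (y - z)) y = ε' * D := by
    rw [dist_eq_norm]
    simp only [add_sub_cancel_left]
    rw [norm_smul, Real.norm_eq_abs, abs_of_pos hε', hD]
  rw [this]
  calc ε' * D ≤ ρ / (2 * D + 2) * D := by nlinarith
  _ < ρ := by
      rw [div_mul_eq_mul_div, div_lt_iff₀ (by linarith)]
      nlinarith

lemma mem_intrinsicInterior_of_extension {s : Set (E d)} (hs : Convex ℝ s) {x₀ y : E d}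
    (hx₀ : x₀ ∈ intrinsicInterior ℝ s) (hy : y ∈ s)
    (h : ∃ ε > (0:ℝ), y + ε • (y - x₀) ∈ s) : y ∈ intrinsicInterior ℝ s := by
  obtain ⟨ε, hε, hz'⟩ := h
  obtain ⟨hx₀s, ρ, hρ, hchar⟩ := mem_intrinsicInterior_iff_ball.1 hx₀
  set θ : ℝ := ε / (1 + ε) with hθdef
  have h1ε : (0:ℝ) < 1 + ε := by linarith
  have hθ0 : 0 < θ := div_pos hε h1ε
  have hθ1 : θ < 1 := by
    rw [hθdef, div_lt_one h1ε]; linarith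
  refine mem_intrinsicInterior_iff_ball.2 ⟨hy, θ * ρ, by positivity, fun z hz hdist => ?_⟩
  set x' := x₀ + θ⁻¹ • (z - y) with hx'def
  have hx'span : x' ∈ (affineSpan ℝ s : Set (E d)) := by
    have h1 : z - y ∈ (affineSpan ℝ s).direction :=
      AffineSubspace.vsub_mem_direction hz (subset_affineSpan ℝ s hy)
    have h2 : θ⁻¹ • (z - y) ∈ (affineSpan ℝ s).direction := Submodule.smul_mem _ _ h1
    have := AffineSubspace.vadd_mem_of_mem_direction h2 (subset_affineSpan ℝ s hx₀s)
    simpa [vadd_eq_add, add_comm] using this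
  have hx's : x' ∈ s := by
    refine hchar x' hx'span ?_
    have : dist x' x₀ = θ⁻¹ * dist z y := by
      rw [hx'def, dist_eq_norm, add_sub_cancel_left, norm_smul, Real.norm_eq_abs,
        abs_of_pos (inv_pos.2 hθ0), dist_eq_norm]
    rw [this]
    calc θ⁻¹ * dist z y < θ⁻¹ * (θ * ρ) := by
          apply mul_lt_mul_of_pos_left hdist (inv_pos.2 hθ0)
    _ = ρ := by field_simp
  have hzcomb : z = θ • x' + (1 - θ) • (y + ε • (y - x₀)) := by
    have hθne : θ ≠ 0 := ne_of_gt hθ0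
    have hc1 : (1 - θ) * ε = θ := by
      rw [hθdef]; field_simp; ring
    rw [hx'def, smul_add, smul_smul, mul_inv_cancel₀ hθne, one_smul,
      smul_add (1 - θ), smul_smul, hc1]
    module
  rw [hzcomb]
  exact hs hx's hz' hθ0.le (by linarith) (by ring)

lemma face_absorbs_of_intrinsicInterior {K F s : Set (E d)} {c : E d}
    (hF : F = maximizers K c) (hsK : s ⊆ K) {y : E d}
    (hy : y ∈ intrinsicInterior ℝ s) (hyF : y ∈ F) : s ⊆ F := by
  intro z hz
  obtain ⟨ε, hε, hext⟩ := exists_extension_of_mem_intrinsicInterior hy hz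
  have hpt : y + ε • (y - z) ∈ K := hsK (hext ε hε le_rfl)
  rw [hF] at hyF ⊢
  have hle := hyF.2 _ hpt
  have hexp : ⟪y + ε • (y - z), c⟫ = ⟪y, c⟫ + ε * (⟪y, c⟫ - ⟪z, c⟫) := by
    rw [inner_add_left, real_inner_smul_left, inner_sub_left]
  rw [hexp] at hle
  have hzy : ⟪y, c⟫ ≤ ⟪z, c⟫ := by nlinarith
  exact ⟨hsK hz, fun w hw => le_trans (hyF.2 w hw) hzy⟩

lemma zero_mem_polarDual (K : Set (E d)) : (0:E d) ∈ polarDual K := by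
  intro y _; rw [inner_zero_left]; norm_num

lemma polarDual_convex (K : Set (E d)) : Convex ℝ (polarDual K) := by
  intro x hx y hy a b ha hb hab z hz
  have h1 := hx z hz
  have h2 := hy z hz
  rw [inner_add_left, real_inner_smul_left, real_inner_smul_left]
  nlinarith

lemma inner_le_one_of_mem_polarDual {K : Set (E d)} {q p : E d}
    (hq : q ∈ polarDual K) (hp : p ∈ K) : ⟪q, p⟫ ≤ 1 := hq p hp

lemma polarDual_convexHull (W : Finset (E d)) :
    polarDual (convexHull ℝ (W : Set (E d))) = {x | ∀ w ∈ W, ⟪x, w⟫ ≤ 1} := by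
  ext x
  constructor
  · intro hx w hw
    exact hx w (subset_convexHull ℝ _ (Finset.mem_coe.2 hw))
  · intro hx y hy
    have hlin : IsLinearMap ℝ (fun y : E d => ⟪x, y⟫) :=
      ⟨fun a b => inner_add_right x a b, fun t a => real_inner_smul_right x a t⟩
    exact convexHull_min (fun w hw => hx w (Finset.mem_coe.1 hw))
      (convex_halfSpace_le hlin 1) hy

lemma polarDual_isClosed (K : Set (E d)) : IsClosed (polarDual K) := by
  have : polarDual K = ⋂ y ∈ K, {x : E d | ⟪x, y⟫ ≤ 1} := by
    ext x; simp [polarDual, Set.mem_iInter₂]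
  rw [this]
  exact isClosed_biInter fun y _ =>
    isClosed_le (Continuous.inner continuous_id continuous_const) continuous_const

lemma polarDual_subset_ball {K : Set (E d)} {ρ : ℝ} (hρ : 0 < ρ)
    (hball : Metric.ball (0:E d) ρ ⊆ K) : polarDual K ⊆ Metric.closedBall 0 (2/ρ) := by
  intro q hq
  rw [Metric.mem_closedBall, dist_zero_right]
  rcases eq_or_ne q 0 with rfl | hq0
  · rw [norm_zero]; positivity
  · have hqn : 0 < ‖q‖ := norm_pos_iff.2 hq0
    set y := (ρ / 2) • (‖q‖⁻¹ • q) with hy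
    have hymem : y ∈ Metric.ball (0:E d) ρ := by
      rw [Metric.mem_ball, dist_zero_right, hy, norm_smul, norm_smul, norm_inv, norm_norm,
        Real.norm_eq_abs, abs_of_pos (by positivity : (0:ℝ) < ρ/2)]
      rw [inv_mul_cancel₀ (ne_of_gt hqn)]
      linarith
    have := hq y (hball hymem)
    rw [hy, real_inner_smul_right, real_inner_smul_right, real_inner_self_eq_norm_sq] at this
    have hq2 : ‖q‖⁻¹ * ‖q‖ ^ 2 = ‖q‖ := by
      field_simp [pow_two]
    rw [hq2] at this
    rw [le_div_iff₀ hρ]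
    nlinarith

lemma ball_subset_polarDual {K : Set (E d)} {R : ℝ} (hR : 0 < R)
    (hK : K ⊆ Metric.closedBall (0:E d) R) : Metric.ball 0 (1/R) ⊆ polarDual K := by
  intro x hx y hy
  rw [Metric.mem_ball, dist_zero_right] at hx
  have hyR : ‖y‖ ≤ R := by
    have := hK hy
    rwa [Metric.mem_closedBall, dist_zero_right] at this
  calc ⟪x, y⟫ ≤ ‖x‖ * ‖y‖ := real_inner_le_norm x y
  _ ≤ (1/R) * R := mul_le_mul hx.le hyR (norm_nonneg _) (by positivity)
  _ = 1 := by field_simp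

lemma polarDual_isCompact {K : Set (E d)} {ρ : ℝ} (hρ : 0 < ρ)
    (hball : Metric.ball (0:E d) ρ ⊆ K) : IsCompact (polarDual K) := by
  refine Metric.isCompact_of_isClosed_isBounded (polarDual_isClosed K) ?_
  exact Bornology.IsBounded.subset (Metric.isBounded_closedBall) (polarDual_subset_ball hρ hball)

lemma polarDual_polarDual {K : Set (E d)} (hKc : Convex ℝ K) (hKcl : IsClosed K)
    (h0 : (0:E d) ∈ K) : polarDual (polarDual K) = K := by
  apply Set.Subset.antisymm
  · intro z hz
    by_contra hzK
    obtain ⟨f, s, hfK, hfz⟩ := geometric_hahn_banach_closed_point hKc hKcl hzK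
    have hs0 : 0 < s := by
      have := hfK 0 h0
      simpa using this
    set u := (InnerProductSpace.toDual ℝ (E d)).symm f with hu
    have hinner : ∀ x : E d, ⟪u, x⟫ = f x := fun x => InnerProductSpace.toDual_symm_apply
    have hq : s⁻¹ • u ∈ polarDual K := by
      intro y hy
      rw [real_inner_smul_left, hinner]
      rw [inv_mul_le_iff₀ hs0, mul_one]
      exact (hfK y hy).le
    have := hz _ hq
    have hzu : (inner ℝ z u : ℝ) = f z := by rw [real_inner_comm]; exact hinner z
    rw [real_inner_smul_right, hzu] at this
    rw [inv_mul_le_iff₀ hs0, mul_one] at this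
    exact absurd hfz (not_lt.2 this)
  · intro y hy q hq
    rw [real_inner_comm]
    exact hq y hy

lemma polarDual_isPolytope {K : Set (E d)} (hK : IsPolytope K) {ρ : ℝ} (hρ : 0 < ρ)
    (hball : Metric.ball (0:E d) ρ ⊆ K) : IsPolytope (polarDual K) := by
  obtain ⟨V, hVne, rfl⟩ := hK
  set Q := polarDual (convexHull ℝ (V : Set (E d))) with hQdef
  have hQconv : Convex ℝ Q := polarDual_convex _
  have hQcomp : IsCompact Q := polarDual_isCompact hρ hball
  have hmem : ∀ x : E d, x ∈ Q ↔ ∀ w ∈ V, ⟪x, w⟫ ≤ 1 := by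
    intro x
    rw [hQdef, polarDual_convexHull]
    rfl
  have hfin : (Q.extremePoints ℝ).Finite := by
    set φ : E d → Finset (E d) := fun e => V.filter (fun v => ⟪e, v⟫ = 1) with hφ
    apply Set.Finite.of_finite_image (f := φ)
    · apply Set.Finite.subset (V.powerset : Finset (Finset (E d))).finite_toSet
      rintro x ⟨e, _, rfl⟩
      exact Finset.mem_coe.2 (Finset.mem_powerset.2 (Finset.filter_subset _ _))
    · rintro e₁ he₁ e₂ he₂ hφeq
      by_contra hne
      set u := e₁ - e₂ with hu
      have hu0 : u ≠ 0 := sub_ne_zero.2 hne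
      have he₁Q : e₁ ∈ Q := he₁.1
      have he₂Q : e₂ ∈ Q := he₂.1
      -- margin
      set T := V.filter (fun v => ⟪e₁, v⟫ ≠ 1) with hT
      set ε : ℝ := if h : T.Nonempty then T.inf' h (fun v => (1 - ⟪e₁, v⟫) / (1 + |⟪u, v⟫|)) else 1
        with hε
      have hε0 : 0 < ε := by
        rw [hε]
        split_ifs with h
        · obtain ⟨v, hv, hveq⟩ := Finset.exists_mem_eq_inf' h
            (fun v => (1 - ⟪e₁, v⟫) / (1 + |⟪u, v⟫|))
          rw [hveq]
          have hvV : v ∈ V := (Finset.mem_filter.1 hv).1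
          have hvne : ⟪e₁, v⟫ ≠ 1 := (Finset.mem_filter.1 hv).2
          have hvle : ⟪e₁, v⟫ ≤ 1 := (hmem e₁).1 he₁Q v hvV
          have hlt1 : ⟪e₁, v⟫ < 1 := lt_of_le_of_ne hvle hvne
          have habs : (0:ℝ) < 1 + |⟪u, v⟫| := by positivity
          exact div_pos (by linarith) habs
        · exact one_pos
      have hbound : ∀ v ∈ V, |⟪ε • u, v⟫| ≤ 1 - ⟪e₁, v⟫ ∨ ⟪u, v⟫ = 0 := by
        intro v hvV
        by_cases hveq : ⟪e₁, v⟫ = 1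
        · right
          -- v in the common active set
          have hv₂ : ⟪e₂, v⟫ = 1 := by
            have hv1 : v ∈ φ e₁ := Finset.mem_filter.2 ⟨hvV, hveq⟩
            have hv2 : v ∈ φ e₂ := hφeq ▸ hv1
            exact (Finset.mem_filter.1 hv2).2
          rw [hu, inner_sub_left, hveq, hv₂, sub_self]
        · left
          have hvT : v ∈ T := Finset.mem_filter.2 ⟨hvV, hveq⟩
          have hεle : ε ≤ (1 - ⟪e₁, v⟫) / (1 + |⟪u, v⟫|) := by
            rw [hε, dif_pos ⟨v, hvT⟩]
            exact Finset.inf'_le _ hvT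
          have hvlt : ⟪e₁, v⟫ < 1 :=
            lt_of_le_of_ne ((hmem e₁).1 he₁Q v hvV) hveq
          have habs : (0:ℝ) < 1 + |⟪u, v⟫| := by positivity
          rw [real_inner_smul_left, abs_mul, abs_of_pos hε0]
          calc ε * |⟪u, v⟫| ≤ (1 - ⟪e₁, v⟫) / (1 + |⟪u, v⟫|) * |⟪u, v⟫| := by
                apply mul_le_mul_of_nonneg_right hεle (abs_nonneg _)
          _ ≤ 1 - ⟪e₁, v⟫ := by
                rw [div_mul_eq_mul_div, div_le_iff₀ habs]
                nlinarith [abs_nonneg (⟪u, v⟫ : ℝ), sub_pos.2 hvlt]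
      have haQ : e₁ + ε • u ∈ Q := by
        rw [hmem]
        intro v hvV
        rw [inner_add_left]
        rcases hbound v hvV with h | h
        · have := (abs_le.1 h).2; linarith
        · rw [real_inner_smul_left, h, mul_zero, add_zero]
          exact (hmem e₁).1 he₁Q v hvV
      have hbQ : e₁ - ε • u ∈ Q := by
        rw [hmem]
        intro v hvV
        rw [sub_eq_add_neg, inner_add_left, inner_neg_left]
        rcases hbound v hvV with h | h
        · have := (abs_le.1 h).1; linarith
        · rw [real_inner_smul_left, h, mul_zero, neg_zero, add_zero]
          exact (hmem e₁).1 he₁Q v hvV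
      have hseg : e₁ ∈ openSegment ℝ (e₁ + ε • u) (e₁ - ε • u) := by
        refine ⟨1/2, 1/2, by norm_num, by norm_num, by norm_num, ?_⟩
        module
      have := he₁.2 haQ hbQ hseg
      have hεu : ε • u = 0 := by
        have h1 : e₁ + ε • u = e₁ := this
        have := add_eq_left.1 h1
        exact this
      exact hu0 (by simpa [smul_eq_zero, ne_of_gt hε0] using hεu)
  -- conclude
  have hKM := closure_convexHull_extremePoints hQcomp hQconv
  have hhullclosed : IsClosed (convexHull ℝ (Q.extremePoints ℝ)) :=
    (Set.Finite.isCompact_convexHull ℝ hfin).isClosed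
  have hQeq : Q = convexHull ℝ (Q.extremePoints ℝ) := by
    rw [← hhullclosed.closure_eq, hKM]
  have hne : (Q.extremePoints ℝ).Nonempty := by
    by_contra hemp
    rw [Set.not_nonempty_iff_eq_empty] at hemp
    have : Q = ∅ := by rw [hQeq, hemp, convexHull_empty]
    have h0Q : (0:E d) ∈ Q := zero_mem_polarDual _
    rw [this] at h0Q
    exact h0Q
  refine ⟨hfin.toFinset, ?_, ?_⟩
  · rwa [← Set.Finite.toFinset_nonempty hfin] at hne
  · rw [Set.Finite.coe_toFinset]
    exact hQeq

lemma affineSpan_eq_top_of_ball_subset {K : Set (E d)} {ρ : ℝ} (hρ : 0 < ρ)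
    (hball : Metric.ball (0:E d) ρ ⊆ K) : affineSpan ℝ K = ⊤ := by
  rw [eq_top_iff]
  intro v _
  have h0 : (0:E d) ∈ affineSpan ℝ K :=
    subset_affineSpan ℝ K (hball (Metric.mem_ball_self hρ))
  rcases eq_or_ne v 0 with rfl | hv0
  · exact h0
  · have hvn : 0 < ‖v‖ := norm_pos_iff.2 hv0
    set t : ℝ := ρ / (2 * ‖v‖) with ht
    have ht0 : 0 < t := by positivity
    have htv : t • v ∈ affineSpan ℝ K := by
      apply subset_affineSpan ℝ K
      apply hball
      rw [Metric.mem_ball, dist_zero_right, norm_smul, Real.norm_eq_abs, abs_of_pos ht0, ht]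
      rw [div_mul_eq_mul_div, mul_comm]
      rw [div_lt_iff₀ (by positivity)]
      nlinarith
    have := AffineSubspace.smul_vsub_vadd_mem (affineSpan ℝ K) t⁻¹ htv h0 h0
    simpa [vsub_eq_sub, vadd_eq_add, smul_smul, inv_mul_cancel₀ (ne_of_gt ht0)] using this

lemma maximizers_ne_self {K : Set (E d)} (hspan : affineSpan ℝ K = ⊤) (hne : K.Nonempty)
    {c : E d} (hc : c ≠ 0) : maximizers K c ≠ K := by
  intro h
  obtain ⟨x₀, hx₀⟩ := hne
  have hconst : ∀ y ∈ K, ⟪y, c⟫ = ⟪x₀, c⟫ := by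
    intro y hy
    have hymax : y ∈ maximizers K c := h.symm ▸ hy
    have hx₀max : x₀ ∈ maximizers K c := h.symm ▸ hx₀
    exact le_antisymm (hx₀max.2 y hy) (hymax.2 x₀ hx₀)
  set H : AffineSubspace ℝ (E d) :=
    { carrier := {x | ⟪x, c⟫ = ⟪x₀, c⟫}
      smul_vsub_vadd_mem' := by
        intro t p₁ p₂ p₃ h₁ h₂ h₃
        simp only [Set.mem_setOf_eq] at h₁ h₂ h₃ ⊢
        rw [vsub_eq_sub, vadd_eq_add, inner_add_left, real_inner_smul_left, inner_sub_left,
          h₁, h₂, h₃]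
        ring } with hH
  have hle : affineSpan ℝ K ≤ H := affineSpan_le.2 fun y hy => hconst y hy
  rw [hspan] at hle
  have hmem : x₀ + c ∈ H := hle (AffineSubspace.mem_top ℝ (E d) _)
  have : ⟪x₀ + c, c⟫ = ⟪x₀, c⟫ := hmem
  rw [inner_add_left] at this
  have : ⟪c, c⟫ = 0 := by linarith
  exact hc (inner_self_eq_zero.1 this)

lemma continuous_vSup (W : Finset (E d)) (hW : W.Nonempty) :
    Continuous fun v : E d => vSup W hW v := by
  induction hW using Finset.Nonempty.cons_induction with
  | singleton a =>
    simpa [vSup] using (continuous_const.inner continuous_id : Continuous fun v : E d => ⟪a, v⟫)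
  | cons a s ha hs ih =>
    have heq : ∀ H : (Finset.cons a s ha).Nonempty,
        (fun v : E d => vSup (Finset.cons a s ha) H v) = fun v => max ⟪a, v⟫ (vSup s hs v) := by
      intro H; funext v
      rw [vSup, Finset.sup'_cons hs]
      rfl
    rw [heq _]
    exact Continuous.max (continuous_const.inner continuous_id) ih

lemma exists_support_dir {G : Set (E d)} (hGconv : Convex ℝ G) {x₀ v : E d}
    (hx₀ : x₀ ∈ intrinsicInterior ℝ G) (hv : v ∈ G) (hvnot : v ∉ intrinsicInterior ℝ G) :
    ∃ m : E d, m ∈ (affineSpan ℝ G).direction ∧ (∀ g ∈ G, ⟪g, m⟫ ≤ ⟪v, m⟫) ∧ ⟪x₀, m⟫ < ⟪v, m⟫ := by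
  obtain ⟨hx₀G, ρ₀, hρ₀, hchar⟩ := mem_intrinsicInterior_iff_ball.1 hx₀
  set Wd := (affineSpan ℝ G).direction with hWd
  have hvspan : v ∈ affineSpan ℝ G := subset_affineSpan ℝ G hv
  have hx₀span : x₀ ∈ affineSpan ℝ G := subset_affineSpan ℝ G hx₀G
  set C' : Set ↥Wd := {w | (w : E d) + v ∈ G} with hC'
  have hC'conv : Convex ℝ C' := by
    intro w₁ h1 w₂ h2 a b ha hb hab
    have key : ((a • w₁ + b • w₂ : ↥Wd) : E d) + v
        = a • ((w₁ : E d) + v) + b • ((w₂ : E d) + v) := by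
      push_cast
      have : a • ((w₁ : E d) + v) + b • ((w₂ : E d) + v)
          = a • (w₁ : E d) + b • (w₂ : E d) + (a + b) • v := by module
      rw [this, hab, one_smul]
    show ((a • w₁ + b • w₂ : ↥Wd) : E d) + v ∈ G
    rw [key]
    exact hGconv h1 h2 ha hb hab
  have hx₀d : x₀ - v ∈ Wd := AffineSubspace.vsub_mem_direction hx₀span hvspan
  set xh : ↥Wd := ⟨x₀ - v, hx₀d⟩ with hxh
  have hxhint : xh ∈ interior C' := by
    rw [mem_interior_iff_mem_nhds]
    refine Metric.mem_nhds_iff.2 ⟨ρ₀, hρ₀, fun w hw => ?_⟩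
    rw [Metric.mem_ball, Subtype.dist_eq] at hw
    have hwspan : ((w : E d) + v) ∈ (affineSpan ℝ G : Set (E d)) := by
      have := AffineSubspace.vadd_mem_of_mem_direction w.2 hvspan
      simpa [vadd_eq_add] using this
    refine hchar _ hwspan ?_
    have : dist ((w : E d) + v) x₀ = dist (w : E d) (xh : E d) := by
      rw [dist_eq_norm, dist_eq_norm, hxh]
      congr 1
      simp only [Submodule.coe_mk]
      abel
    rw [this]
    exact hw
  have h0C : (0 : ↥Wd) ∉ interior C' := by
    intro h0
    obtain ⟨r, hr, hball⟩ := Metric.mem_nhds_iff.1 (mem_interior_iff_mem_nhds.1 h0)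
    apply hvnot
    refine mem_intrinsicInterior_iff_ball.2 ⟨hv, r, hr, fun z hz hdist => ?_⟩
    have hzd : z - v ∈ Wd := AffineSubspace.vsub_mem_direction hz hvspan
    have : (⟨z - v, hzd⟩ : ↥Wd) ∈ Metric.ball (0 : ↥Wd) r := by
      rw [Metric.mem_ball, Subtype.dist_eq]
      simpa [dist_eq_norm] using hdist
    have := hball this
    have hzG : (z - v) + v ∈ G := this
    simpa using hzG
  obtain ⟨f, hf⟩ := geometric_hahn_banach_open_point hC'conv.interior isOpen_interior h0C
  rw [map_zero] at hf
  set m₀ := (InnerProductSpace.toDual ℝ ↥Wd).symm f with hm₀def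
  have hm₀ : ∀ a : ↥Wd, ⟪m₀, a⟫ = f a := fun a => InnerProductSpace.toDual_symm_apply
  have hfx : f xh < 0 := hf xh hxhint
  have hC'le : ∀ a ∈ C', f a ≤ 0 := by
    intro a ha
    by_contra hpos
    push_neg at hpos
    set A := f xh with hA
    set B := f a with hB
    set θ : ℝ := B / (B + |A| + 1) with hθ
    have hden : (0:ℝ) < B + |A| + 1 := by positivity
    have hθ0 : 0 < θ := div_pos hpos hden
    have hθ1 : θ < 1 := by
      rw [hθ, div_lt_one hden]
      have := abs_nonneg A
      linarith
    have hcombo : θ • xh + (1 - θ) • a ∈ interior C' :=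
      hC'conv.combo_interior_closure_mem_interior hxhint (subset_closure ha) hθ0
        (by linarith) (by ring)
    have hlt := hf _ hcombo
    rw [map_add, map_smul, map_smul] at hlt
    have hθeq : θ * (B + |A| + 1) = B := by
      rw [hθ]; field_simp
    have habs : -|A| ≤ A := neg_abs_le A
    simp only [smul_eq_mul] at hlt
    nlinarith
  refine ⟨(m₀ : E d), m₀.2, ?_, ?_⟩
  · intro g hg
    have hgd : g - v ∈ Wd :=
      AffineSubspace.vsub_mem_direction (subset_affineSpan ℝ G hg) hvspan
    have hmem : (⟨g - v, hgd⟩ : ↥Wd) ∈ C' := by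
      show (g - v) + v ∈ G
      simpa using hg
    have := hC'le _ hmem
    rw [← hm₀ _] at this
    rw [Submodule.coe_inner] at this
    have h2 : ⟪(m₀ : E d), g - v⟫ ≤ 0 := this
    rw [inner_sub_right] at h2
    have e1 : ⟪g, (m₀ : E d)⟫ = ⟪(m₀ : E d), g⟫ := real_inner_comm _ _
    have e2 : ⟪v, (m₀ : E d)⟫ = ⟪(m₀ : E d), v⟫ := real_inner_comm _ _
    linarith
  · have := hfx
    rw [← hm₀ _] at this
    rw [Submodule.coe_inner] at this
    have h2 : ⟪(m₀ : E d), x₀ - v⟫ < 0 := this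
    rw [inner_sub_right] at h2
    have e1 : ⟪x₀, (m₀ : E d)⟫ = ⟪(m₀ : E d), x₀⟫ := real_inner_comm _ _
    have e2 : ⟪v, (m₀ : E d)⟫ = ⟪(m₀ : E d), v⟫ := real_inner_comm _ _
    linarith

lemma exists_proj_point {Wd : Submodule ℝ (E d)} {A : Finset (E d)} (hA : A.Nonempty) {p : E d}
    (h : ∀ m : E d, m ∈ Wd → ⟪p, m⟫ ≤ A.sup' hA (fun w => ⟪w, m⟫)) :
    ∃ z ∈ convexHull ℝ (A : Set (E d)), ∀ m ∈ Wd, ⟪p - z, m⟫ = 0 := by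
  set π : E d → ↥Wd := fun x => Wd.orthogonalProjectionOnto x with hπ
  set S : Set ↥Wd := π '' (convexHull ℝ (A : Set (E d))) with hS
  have hdecomp : ∀ (x : E d) (m : E d), m ∈ Wd → ⟪x, m⟫ = ⟪((π x : ↥Wd) : E d), m⟫ := by
    intro x m hm
    have := Wd.starProjection_inner_eq_zero x m hm
    rw [Submodule.starProjection_apply] at this
    have hsplit : ⟪x, m⟫ = ⟪x - ((π x : ↥Wd) : E d), m⟫ + ⟪((π x : ↥Wd) : E d), m⟫ := by
      rw [← inner_add_left]
      congr 1
      abel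
    rw [hsplit, this, zero_add]
  have hmem : π p ∈ S := by
    by_contra hnot
    have hSconv : Convex ℝ S := by
      have := (convex_convexHull ℝ (A : Set (E d))).linear_image
        ((Wd.orthogonalProjectionOnto).toLinearMap)
      exact this
    have hScomp : IsCompact S :=
      ((Set.Finite.isCompact_convexHull ℝ (Finset.finite_toSet A)).image
        (Wd.orthogonalProjectionOnto).continuous)
    obtain ⟨f, s, hfS, hfp⟩ := geometric_hahn_banach_closed_point hSconv hScomp.isClosed hnot
    set m₀ := (InnerProductSpace.toDual ℝ ↥Wd).symm f with hm₀def
    have hm₀ : ∀ a : ↥Wd, ⟪m₀, a⟫ = f a := fun a => InnerProductSpace.toDual_symm_apply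
    set m : E d := (m₀ : E d) with hm
    have hsup : A.sup' hA (fun w => ⟪w, m⟫) < s := by
      rw [Finset.sup'_lt_iff]
      intro w hw
      have hw' : π w ∈ S := ⟨w, subset_convexHull ℝ _ (Finset.mem_coe.2 hw), rfl⟩
      have := hfS _ hw'
      rw [← hm₀ _] at this
      rw [Submodule.coe_inner] at this
      calc ⟪w, m⟫ = ⟪((π w : ↥Wd) : E d), m⟫ := hdecomp w m m₀.2
      _ = ⟪(m₀ : E d), ((π w : ↥Wd) : E d)⟫ := real_inner_comm _ _
      _ < s := this
    have hp' : s < ⟪p, m⟫ := by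
      rw [hdecomp p m m₀.2]
      have : f (π p) = ⟪(m₀ : E d), ((π p : ↥Wd) : E d)⟫ := by
        rw [← Submodule.coe_inner, hm₀]
      rw [← real_inner_comm, ← this]
      exact hfp
    have := h m m₀.2
    linarith
  obtain ⟨z, hz, hπz⟩ := hmem
  refine ⟨z, hz, fun m hm => ?_⟩
  have h1 : ⟪p, m⟫ = ⟪((π p : ↥Wd) : E d), m⟫ := hdecomp p m hm
  have h2 : ⟪z, m⟫ = ⟪((π z : ↥Wd) : E d), m⟫ := hdecomp z m hm
  rw [inner_sub_left, h1, h2, hπz, sub_self]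

lemma finrank_lt_of_flat_subface {G G' : Set (E d)} (hsub : G' ⊆ G)
    {m : E d} (hm : m ∈ (affineSpan ℝ G).direction) (hm0 : m ≠ 0)
    (hconst : ∀ a ∈ G', ∀ b ∈ G', ⟪a, m⟫ = ⟪b, m⟫) :
    Module.finrank ℝ (affineSpan ℝ G').direction < Module.finrank ℝ (affineSpan ℝ G).direction := by
  have hle : (affineSpan ℝ G').direction ≤ (affineSpan ℝ G).direction :=
    AffineSubspace.direction_le (affineSpan_mono ℝ hsub)
  have hmnot : m ∉ (affineSpan ℝ G').direction := by
    intro hmem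
    rw [direction_affineSpan] at hmem
    have hker : vectorSpan ℝ G' ≤ LinearMap.ker ((innerSL ℝ m).toLinearMap) := by
      rw [vectorSpan_def]
      rw [Submodule.span_le]
      rintro x ⟨a, ha, b, hb, rfl⟩
      simp only [SetLike.mem_coe, LinearMap.mem_ker, ContinuousLinearMap.coe_coe, innerSL_apply_apply]
      rw [vsub_eq_sub, inner_sub_right]
      have e1 : ⟪m, a⟫ = ⟪a, m⟫ := real_inner_comm _ _
      have e2 : ⟪m, b⟫ = ⟪b, m⟫ := real_inner_comm _ _
      rw [e1, e2, hconst a ha b hb]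
      ring
    have := hker hmem
    simp only [LinearMap.mem_ker, ContinuousLinearMap.coe_coe, innerSL_apply_apply] at this
    exact hm0 (inner_self_eq_zero.1 this)
  have hlt : (affineSpan ℝ G').direction < (affineSpan ℝ G).direction :=
    lt_of_le_of_ne hle (fun he => hmnot (he ▸ hm))
  exact Submodule.finrank_lt_finrank_of_lt hlt

lemma polar_extension {W : Finset (E d)} {L : Set (E d)}
    (hL : L = polarDual (convexHull ℝ (W : Set (E d)))) {a b : E d}
    (ha : a ∈ L) (hb : b ∈ L) (hkey : ∀ w ∈ W, ⟪a, w⟫ = 1 → ⟪b, w⟫ = 1) :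
    ∃ ε > (0:ℝ), a + ε • (a - b) ∈ L := by
  have hmem : ∀ x : E d, x ∈ L ↔ ∀ w ∈ W, ⟪x, w⟫ ≤ 1 := by
    intro x; rw [hL, polarDual_convexHull]; rfl
  set T := W.filter (fun w => ⟪a, w⟫ ≠ 1) with hT
  set ε : ℝ := if h : T.Nonempty then T.inf' h (fun w => (1 - ⟪a, w⟫) / (1 + |⟪a - b, w⟫|)) else 1
    with hε
  have hε0 : 0 < ε := by
    rw [hε]
    split_ifs with h
    · obtain ⟨w, hw, hweq⟩ := Finset.exists_mem_eq_inf' h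
        (fun w => (1 - ⟪a, w⟫) / (1 + |⟪a - b, w⟫|))
      rw [hweq]
      have hwW : w ∈ W := (Finset.mem_filter.1 hw).1
      have hwne : ⟪a, w⟫ ≠ 1 := (Finset.mem_filter.1 hw).2
      have hwle : ⟪a, w⟫ ≤ 1 := (hmem a).1 ha w hwW
      have hlt : ⟪a, w⟫ < 1 := lt_of_le_of_ne hwle hwne
      have : (0:ℝ) < 1 + |⟪a - b, w⟫| := by positivity
      exact div_pos (by linarith) this
    · exact one_pos
  refine ⟨ε, hε0, (hmem _).2 fun w hwW => ?_⟩
  rw [inner_add_left, real_inner_smul_left]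
  by_cases hw1 : ⟪a, w⟫ = 1
  · have hb1 : ⟪b, w⟫ = 1 := hkey w hwW hw1
    rw [inner_sub_left, hw1, hb1]
    norm_num
  · have hwT : w ∈ T := Finset.mem_filter.2 ⟨hwW, hw1⟩
    have hεle : ε ≤ (1 - ⟪a, w⟫) / (1 + |⟪a - b, w⟫|) := by
      rw [hε, dif_pos ⟨w, hwT⟩]
      exact Finset.inf'_le _ hwT
    have hwle : ⟪a, w⟫ ≤ 1 := (hmem a).1 ha w hwW
    have habs : (0:ℝ) < 1 + |⟪a - b, w⟫| := by positivity
    have h1 : ε * ⟪a - b, w⟫ ≤ ε * |⟪a - b, w⟫| :=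
      mul_le_mul_of_nonneg_left (le_abs_self _) hε0.le
    have h2 : ε * |⟪a - b, w⟫| ≤ 1 - ⟪a, w⟫ := by
      calc ε * |⟪a - b, w⟫| ≤ (1 - ⟪a, w⟫) / (1 + |⟪a - b, w⟫|) * |⟪a - b, w⟫| :=
            mul_le_mul_of_nonneg_right hεle (abs_nonneg _)
      _ ≤ 1 - ⟪a, w⟫ := by
            rw [div_mul_eq_mul_div, div_le_iff₀ habs]
            nlinarith [abs_nonneg (⟪a - b, w⟫ : ℝ), sub_nonneg.2 hwle]
    linarith

lemma dual_face_of_relint {K L : Set (E d)} (hKL : polarDual L = K) (hLconv : Convex ℝ L)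
    {c y₀ : E d} (hy₀ : y₀ ∈ intrinsicInterior ℝ (maximizers L c)) (hpos : 0 < ⟪y₀, c⟫) :
    maximizers K y₀ = {p ∈ K | ∀ q ∈ maximizers L c, ⟪q, p⟫ = 1} := by
  set D := maximizers L c with hD
  have hy₀D : y₀ ∈ D := intrinsicInterior_subset hy₀
  have hy₀L : y₀ ∈ L := hy₀D.1
  set γ := (⟪y₀, c⟫ : ℝ) with hγ
  set w := γ⁻¹ • c with hw
  have hwK : w ∈ K := by
    rw [← hKL]
    intro q hq
    rw [hw, real_inner_smul_left]
    have h1 : ⟪q, c⟫ ≤ γ := hy₀D.2 q hq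
    have h2 : (⟪c, q⟫ : ℝ) = ⟪q, c⟫ := real_inner_comm _ _
    rw [h2]
    rw [inv_mul_le_iff₀ hpos, mul_one]
    exact h1
  have hwy₀ : (⟪w, y₀⟫ : ℝ) = 1 := by
    rw [hw, real_inner_smul_left]
    have : (⟪c, y₀⟫ : ℝ) = γ := real_inner_comm y₀ c
    rw [this, inv_mul_cancel₀ (ne_of_gt hpos)]
  have hKle : ∀ p ∈ K, (⟪p, y₀⟫ : ℝ) ≤ 1 := by
    intro p hp
    rw [← hKL] at hp
    exact hp y₀ hy₀L
  apply Set.Subset.antisymm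
  · rintro p ⟨hpK, hpmax⟩
    have hp1 : (⟪p, y₀⟫ : ℝ) = 1 :=
      le_antisymm (hKle p hpK) (hwy₀ ▸ hpmax w hwK)
    refine ⟨hpK, fun q hq => ?_⟩
    obtain ⟨ε, hε, hext⟩ := exists_extension_of_mem_intrinsicInterior hy₀ hq
    have hy' : y₀ + ε • (y₀ - q) ∈ L := (hext ε hε le_rfl).1
    have hple : (⟪p, y₀ + ε • (y₀ - q)⟫ : ℝ) ≤ 1 := by
      rw [← hKL] at hpK
      exact hpK _ hy'
    rw [inner_add_right, real_inner_smul_right, inner_sub_right] at hple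
    have hpy : (⟪p, y₀⟫ : ℝ) = 1 := hp1
    have hpq_ge : (1:ℝ) ≤ ⟪p, q⟫ := by nlinarith
    have hpq_le : (⟪p, q⟫ : ℝ) ≤ 1 := by
      rw [← hKL] at hpK
      exact hpK q hq.1
    have hcomm : (⟪q, p⟫ : ℝ) = ⟪p, q⟫ := real_inner_comm p q
    linarith
  · rintro p ⟨hpK, hpq⟩
    refine ⟨hpK, fun y hy => ?_⟩
    have h1 : (⟪y₀, p⟫ : ℝ) = 1 := hpq y₀ hy₀D
    have h1' : (⟪p, y₀⟫ : ℝ) = 1 := (real_inner_comm y₀ p).trans h1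
    rw [h1']
    exact hKle y hy

lemma pc_point_dual {V : Finset (E d)} {K L : Set (E d)}
    (hKV : K = convexHull ℝ (V : Set (E d))) (hLK : L = polarDual K)
    {G : Set (E d)} {x : E d} (hxG : x ∈ intrinsicInterior ℝ G) (hmax : maximizers K x = G)
    (hGK : G ≠ K) :
    0 < (⟪x, x⟫ : ℝ) ∧ maximizers L x = {q ∈ L | ∀ g ∈ G, ⟪q, g⟫ = 1} ∧
      ((⟪x, x⟫ : ℝ)⁻¹ • x) ∈ intrinsicInterior ℝ (maximizers L x) ∧
      maximizers L ((⟪x, x⟫ : ℝ)⁻¹ • x) = maximizers L x := by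
  have hKconv : Convex ℝ K := hKV ▸ convex_convexHull ℝ _
  have hGconv : Convex ℝ G := hmax ▸ maximizers_convexSet hKconv x
  have hxGmem : x ∈ G := intrinsicInterior_subset hxG
  have hxmax : x ∈ maximizers K x := hmax.symm ▸ hxGmem
  have hxK : x ∈ K := hxmax.1
  have hx0 : x ≠ 0 := by
    intro h
    rw [h, maximizers_zero] at hmax
    exact hGK hmax.symm
  have hs : 0 < (⟪x, x⟫ : ℝ) := by
    rw [real_inner_self_eq_norm_sq]
    exact pow_pos (norm_pos_iff.2 hx0) 2
  set s := (⟪x, x⟫ : ℝ) with hsdef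
  have hvals : ∀ g ∈ G, (⟪g, x⟫ : ℝ) = s := by
    intro g hg
    have hgmax : g ∈ maximizers K x := hmax.symm ▸ hg
    exact le_antisymm (hxmax.2 g hgmax.1) (hgmax.2 x hxK)
  have hLmem : ∀ q : E d, q ∈ L ↔ ∀ p ∈ K, (⟪q, p⟫ : ℝ) ≤ 1 := by
    intro q; rw [hLK]; rfl
  have hystar : s⁻¹ • x ∈ L := by
    rw [hLmem]
    intro p hp
    rw [real_inner_smul_left]
    have h1 : (⟪p, x⟫ : ℝ) ≤ s := hxmax.2 p hp
    rw [real_inner_comm p x]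
    rw [inv_mul_le_iff₀ hs, mul_one]
    exact h1
  have hystar1 : (⟪s⁻¹ • x, x⟫ : ℝ) = 1 := by
    rw [real_inner_smul_left, ← hsdef, inv_mul_cancel₀ (ne_of_gt hs)]
  have hLle : ∀ q ∈ L, (⟪q, x⟫ : ℝ) ≤ 1 := fun q hq => (hLmem q).1 hq x hxK
  -- characterization of maximizers L x
  have hDchar : maximizers L x = {q ∈ L | (⟪q, x⟫ : ℝ) = 1} := by
    apply Set.Subset.antisymm
    · rintro q ⟨hqL, hqmax⟩
      exact ⟨hqL, le_antisymm (hLle q hqL) (hystar1 ▸ hqmax _ hystar)⟩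
    · rintro q ⟨hqL, hq1⟩
      exact ⟨hqL, fun y hy => by rw [hq1]; exact hLle y hy⟩
  have hGhat : maximizers L x = {q ∈ L | ∀ g ∈ G, ⟪q, g⟫ = 1} := by
    rw [hDchar]
    apply Set.Subset.antisymm
    · rintro q ⟨hqL, hq1⟩
      refine ⟨hqL, fun g hg => ?_⟩
      obtain ⟨ε, hε, hext⟩ := exists_extension_of_mem_intrinsicInterior hxG hg
      have hx' : x + ε • (x - g) ∈ K := by
        have := hext ε hε le_rfl
        have hG' : x + ε • (x - g) ∈ G := this
        exact (hmax ▸ hG' : x + ε • (x - g) ∈ maximizers K x).1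
      have hle : (⟪q, x + ε • (x - g)⟫ : ℝ) ≤ 1 := (hLmem q).1 hqL _ hx'
      rw [inner_add_right, real_inner_smul_right, inner_sub_right, hq1] at hle
      have hge : (1:ℝ) ≤ ⟪q, g⟫ := by nlinarith
      have hGsubK : G ⊆ K := by rw [← hmax]; exact fun z hz => hz.1
      have hle2 : (⟪q, g⟫ : ℝ) ≤ 1 := (hLmem q).1 hqL g (hGsubK hg)
      exact le_antisymm hle2 hge
    · rintro q ⟨hqL, hqg⟩
      exact ⟨hqL, hqg x hxGmem⟩
  -- relative interior part
  have hLconv : Convex ℝ L := hLK ▸ polarDual_convex K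
  have hD'conv : Convex ℝ (maximizers L x) := maximizers_convexSet hLconv x
  have hystarD : s⁻¹ • x ∈ maximizers L x := by
    rw [hDchar]; exact ⟨hystar, hystar1⟩
  obtain ⟨x₁, hx₁⟩ := Set.Nonempty.intrinsicInterior hD'conv ⟨_, hystarD⟩
  have hx₁D : x₁ ∈ maximizers L x := intrinsicInterior_subset hx₁
  have hLpolarV : L = polarDual (convexHull ℝ (V : Set (E d))) := by rw [hLK, hKV]
  have hkey : ∀ w ∈ V, (⟪s⁻¹ • x, w⟫ : ℝ) = 1 → (⟪x₁, w⟫ : ℝ) = 1 := by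
    intro w hwV hw1
    have hwK : w ∈ K := hKV ▸ subset_convexHull ℝ _ (Finset.mem_coe.2 hwV)
    rw [real_inner_smul_left, inv_mul_eq_one₀ (ne_of_gt hs)] at hw1
    have hwx : (⟪w, x⟫ : ℝ) = s := by
      rw [real_inner_comm x w, ← hw1]
    have hwG : w ∈ G := by
      rw [← hmax]
      exact ⟨hwK, fun y hy => by rw [hwx]; exact hxmax.2 y hy⟩
    have hx₁hat := (hGhat ▸ hx₁D : x₁ ∈ {q ∈ L | ∀ g ∈ G, ⟪q, g⟫ = 1})
    exact hx₁hat.2 w hwG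
  have hx₁L : x₁ ∈ L := hx₁D.1
  obtain ⟨ε, hε, hextL⟩ := polar_extension hLpolarV hystar hx₁L hkey
  have hextD : s⁻¹ • x + ε • (s⁻¹ • x - x₁) ∈ maximizers L x := by
    rw [hDchar]
    refine ⟨hextL, ?_⟩
    have hx₁1 : (⟪x₁, x⟫ : ℝ) = 1 := (hDchar ▸ hx₁D : x₁ ∈ {q ∈ L | (⟪q, x⟫ : ℝ) = 1}).2
    rw [inner_add_left, hystar1, real_inner_smul_left, inner_sub_left, hystar1, hx₁1]
    ring
  have hrel : s⁻¹ • x ∈ intrinsicInterior ℝ (maximizers L x) :=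
    mem_intrinsicInterior_of_extension hD'conv hx₁ hystarD ⟨ε, hε, hextD⟩
  exact ⟨hs, hGhat, hrel, maximizers_smul_pos L x (inv_pos.2 hs)⟩

lemma pc_dual {V VL : Finset (E d)} {K L : Set (E d)}
    (hKV : K = convexHull ℝ (V : Set (E d))) (hLVL : L = convexHull ℝ (VL : Set (E d)))
    (hLK : L = polarDual K) (hKL : polarDual L = K)
    (hspanK : affineSpan ℝ K = ⊤) (hKne : K.Nonempty)
    {ρL : ℝ} (hρL : 0 < ρL) (hballL : Metric.ball (0:E d) ρL ⊆ L)
    (hpcK : ∀ c : E d, c ≠ 0 →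
      ∃ x, x ∈ intrinsicInterior ℝ (maximizers K c) ∧ maximizers K x = maximizers K c) :
    ∀ c : E d, c ≠ 0 →
      ∃ y, y ∈ intrinsicInterior ℝ (maximizers L c) ∧ maximizers L y = maximizers L c := by
  intro c hc
  have hLconv : Convex ℝ L := hLK ▸ polarDual_convex K
  have hLcomp : IsCompact L := hLVL ▸ Set.Finite.isCompact_convexHull ℝ (Finset.finite_toSet VL)
  have hLne : L.Nonempty := ⟨0, hballL (Metric.mem_ball_self hρL)⟩
  set D := maximizers L c with hD
  have hDne : D.Nonempty := maximizers_nonempty hLcomp hLne c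
  have hDconv : Convex ℝ D := maximizers_convexSet hLconv c
  obtain ⟨y₀, hy₀⟩ := Set.Nonempty.intrinsicInterior hDconv hDne
  have hy₀D : y₀ ∈ D := intrinsicInterior_subset hy₀
  -- positivity of the support value
  have hcn : 0 < ‖c‖ := norm_pos_iff.2 hc
  have hzL : (ρL / 2) • (‖c‖⁻¹ • c) ∈ L := by
    apply hballL
    rw [Metric.mem_ball, dist_zero_right, norm_smul, norm_smul, norm_inv, norm_norm,
      Real.norm_eq_abs, abs_of_pos (by positivity : (0:ℝ) < ρL/2),
      inv_mul_cancel₀ (ne_of_gt hcn)]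
    linarith
  have hγ : 0 < (⟪y₀, c⟫ : ℝ) := by
    have h1 := hy₀D.2 _ hzL
    rw [real_inner_smul_left, real_inner_smul_left, real_inner_self_eq_norm_sq] at h1
    have h2 : (0:ℝ) < ρL / 2 * (‖c‖⁻¹ * ‖c‖ ^ 2) := by
      have : ‖c‖⁻¹ * ‖c‖ ^ 2 = ‖c‖ := by field_simp [pow_two]
      rw [this]; positivity
    linarith
  have hy₀0 : y₀ ≠ 0 := by
    intro h
    rw [h, inner_zero_left] at hγ
    exact lt_irrefl 0 hγ
  -- the dual face F of D inside K
  have hFchar : maximizers K y₀ = {p ∈ K | ∀ q ∈ D, ⟪q, p⟫ = 1} :=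
    dual_face_of_relint hKL hLconv hy₀ hγ
  have hFne : (maximizers K y₀).Nonempty :=
    maximizers_nonempty (hKV ▸ Set.Finite.isCompact_convexHull ℝ (Finset.finite_toSet V)) hKne y₀
  have hFneK : maximizers K y₀ ≠ K := maximizers_ne_self hspanK hKne hy₀0
  obtain ⟨x, hxrel, hxmax⟩ := hpcK y₀ hy₀0
  -- apply pc_point_dual with G := maximizers K y₀
  obtain ⟨hs, hGhat, hrel, hsmul⟩ := pc_point_dual hKV hLK hxrel hxmax hFneK
  -- identify F-hat with D
  have hFhatD : {q ∈ L | ∀ f ∈ maximizers K y₀, ⟪q, f⟫ = 1} = D := by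
    apply Set.Subset.antisymm
    · rintro q ⟨hqL, hqf⟩
      -- w := γ⁻¹ • c ∈ F
      set γ := (⟪y₀, c⟫ : ℝ) with hγdef
      have hwK : γ⁻¹ • c ∈ K := by
        rw [← hKL]
        intro q' hq'
        rw [real_inner_smul_left]
        have h1 : (⟪q', c⟫ : ℝ) ≤ γ := hy₀D.2 q' hq'
        rw [real_inner_comm q' c, inv_mul_le_iff₀ hγ, mul_one]
        exact h1
      have hwF : γ⁻¹ • c ∈ maximizers K y₀ := by
        rw [hFchar]
        refine ⟨hwK, fun q' hq' => ?_⟩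
        have hq'val : (⟪q', c⟫ : ℝ) = γ :=
          le_antisymm (hy₀D.2 q' hq'.1) (hq'.2 y₀ hy₀D.1)
        rw [real_inner_smul_right, hq'val, inv_mul_cancel₀ (ne_of_gt hγ)]
      have hq1 : (⟪q, γ⁻¹ • c⟫ : ℝ) = 1 := hqf _ hwF
      rw [real_inner_smul_right] at hq1
      have hqc : (⟪q, c⟫ : ℝ) = γ := by
        rw [inv_mul_eq_one₀ (ne_of_gt hγ)] at hq1
        exact hq1.symm
      refine ⟨hqL, fun y hy => ?_⟩
      rw [hqc]
      exact hy₀D.2 y hy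
    · rintro q hq
      refine ⟨hq.1, fun f hf => ?_⟩
      have := (hFchar ▸ hf : f ∈ {p ∈ K | ∀ q' ∈ D, ⟪q', p⟫ = 1})
      exact this.2 q hq
  refine ⟨(⟪x, x⟫ : ℝ)⁻¹ • x, ?_, ?_⟩
  · show (⟪x, x⟫ : ℝ)⁻¹ • x ∈ intrinsicInterior ℝ (maximizers L c)
    have hDx : maximizers L x = maximizers L c := by rw [hGhat, hFhatD, hD]
    rw [← hDx]
    exact hrel
  · rw [hsmul, hGhat, hFhatD, hD]

lemma zeta {V : Finset (E d)} (hVne : V.Nonempty) {K : Set (E d)}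
    (hKV : K = convexHull ℝ (V : Set (E d))) (hspanK : affineSpan ℝ K = ⊤)
    (hpcK : ∀ c : E d, c ≠ 0 →
      ∃ x, x ∈ intrinsicInterior ℝ (maximizers K c) ∧ maximizers K x = maximizers K c) :
    ∀ (n : ℕ) (c : E d), c ≠ 0 →
      Module.finrank ℝ (affineSpan ℝ (maximizers K c)).direction ≤ n →
      ∀ p ∈ K, p ∉ maximizers K c → ∀ v ∈ maximizers K c,
        ∃ g ∈ maximizers K c, ⟪v, p⟫ < ⟪v, g⟫ := by
  intro n
  induction n using Nat.strong_induction_on with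
  | _ n IH =>
    intro c hc hdim p hpK hpG v hvG
    have hKne : K.Nonempty := by
      obtain ⟨w, hw⟩ := hVne
      exact ⟨w, hKV ▸ subset_convexHull ℝ _ (Finset.mem_coe.2 hw)⟩
    have hKconv : Convex ℝ K := hKV ▸ convex_convexHull ℝ _
    have hGconv : Convex ℝ (maximizers K c) := maximizers_convexSet hKconv c
    have hGsubK : maximizers K c ⊆ K := fun z hz => hz.1
    set Wg := vArg V hVne c with hWg
    have hWgne : Wg.Nonempty := vArg_nonempty V hVne c
    have hGhull : maximizers K c = convexHull ℝ (Wg : Set (E d)) := by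
      rw [hKV]; exact maximizers_convexHull V hVne c
    obtain ⟨x₀, hx₀rel, hx₀max⟩ := hpcK c hc
    have hx₀G : x₀ ∈ maximizers K c := intrinsicInterior_subset hx₀rel
    -- value of x₀-functional on the face
    have hval0 : ∀ g ∈ maximizers K c, (⟪g, x₀⟫ : ℝ) = ⟪x₀, x₀⟫ := by
      intro g hg
      have hg' : g ∈ maximizers K x₀ := hx₀max.symm ▸ hg
      have hx₀' : x₀ ∈ maximizers K x₀ := hx₀max.symm ▸ hx₀G
      exact le_antisymm (hx₀'.2 g hg'.1) (hg'.2 x₀ hx₀'.1)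
    have hpx₀ : (⟪p, x₀⟫ : ℝ) < ⟪x₀, x₀⟫ := by
      have hpnot : p ∉ maximizers K x₀ := hx₀max.symm ▸ hpG
      have : ¬(p ∈ K ∧ ∀ y ∈ K, (⟪y, x₀⟫ : ℝ) ≤ ⟪p, x₀⟫) := hpnot
      push_neg at this
      obtain ⟨y, hyK, hylt⟩ := this hpK
      have hx₀' : x₀ ∈ maximizers K x₀ := hx₀max.symm ▸ hx₀G
      exact lt_of_lt_of_le hylt (hx₀'.2 y hyK)
    -- the descend step for non-relative-interior points
    have hstep : ∀ v' ∈ maximizers K c, v' ∉ intrinsicInterior ℝ (maximizers K c) →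
        ∃ g ∈ maximizers K c, (⟪v', p⟫ : ℝ) < ⟪v', g⟫ := by
      intro v' hv'G hv'not
      obtain ⟨m, hmdir, hmmax, hmstrict⟩ := exists_support_dir hGconv hx₀rel hv'G hv'not
      have hm0 : m ≠ 0 := by
        intro h
        rw [h, inner_zero_right, inner_zero_right] at hmstrict
        exact lt_irrefl 0 hmstrict
      obtain ⟨ε₀, hε₀, hpert⟩ := maximizers_perturb V hVne c m
      set c' := c + ε₀ • m with hc'
      have hG'eq : maximizers K c' = maximizers (maximizers K c) m := by
        rw [hKV] at *
        exact hpert ε₀ hε₀ le_rfl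
      have hG'sub : maximizers K c' ⊆ maximizers K c := by
        rw [hG'eq]; exact fun z hz => hz.1
      have hGneK : maximizers K c ≠ K := maximizers_ne_self hspanK hKne hc
      have hc'0 : c' ≠ 0 := by
        intro h
        have h1 : K = maximizers (maximizers K c) m := by
          rw [← hG'eq, h, maximizers_zero]
        have h2 : K ⊆ maximizers K c := by
          intro z hz
          have hz' : z ∈ maximizers (maximizers K c) m := h1 ▸ hz
          exact hz'.1
        exact hGneK (Set.Subset.antisymm hGsubK h2)
      have hv'G' : v' ∈ maximizers K c' := by
        rw [hG'eq]
        exact ⟨hv'G, fun y hy => hmmax y hy⟩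
      have hx₀not : x₀ ∉ maximizers K c' := by
        rw [hG'eq]
        intro hmem
        exact absurd (hmem.2 v' hv'G) (not_le.2 hmstrict)
      have hconst : ∀ a ∈ maximizers K c', ∀ b ∈ maximizers K c', (⟪a, m⟫ : ℝ) = ⟪b, m⟫ := by
        intro a ha b hb
        rw [hG'eq] at ha hb
        exact le_antisymm (hb.2 a ha.1) (ha.2 b hb.1)
      have hdimlt : Module.finrank ℝ (affineSpan ℝ (maximizers K c')).direction
          < Module.finrank ℝ (affineSpan ℝ (maximizers K c)).direction :=
        finrank_lt_of_flat_subface hG'sub hmdir hm0 hconst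
      have hpG' : p ∉ maximizers K c' := fun h => hpG (hG'sub h)
      obtain ⟨g, hgG', hglt⟩ := IH (Module.finrank ℝ (affineSpan ℝ (maximizers K c')).direction)
        (lt_of_lt_of_le hdimlt hdim) c' hc'0 le_rfl p hpK hpG' v' hv'G'
      exact ⟨g, hG'sub hgG', hglt⟩
    by_cases hvrel : v ∈ intrinsicInterior ℝ (maximizers K c)
    · -- relative interior case: maximize the concave gap function
      by_contra hcon
      push_neg at hcon
      set φ : E d → ℝ := fun u => ⟪u, p⟫ - vSup Wg hWgne u with hφ
      have hφcont : Continuous φ :=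
        (continuous_id.inner continuous_const).sub (continuous_vSup Wg hWgne)
      have hGcomp : IsCompact (maximizers K c) :=
        hGhull ▸ Set.Finite.isCompact_convexHull ℝ (Finset.finite_toSet Wg)
      obtain ⟨vs, hvsG, hvsmax⟩ :=
        hGcomp.exists_isMaxOn ⟨v, hvG⟩ hφcont.continuousOn
      have hφv : 0 ≤ φ v := by
        have hsup : vSup Wg hWgne v ≤ ⟪v, p⟫ := by
          apply Finset.sup'_le
          intro w hw
          have hwG : w ∈ maximizers K c := by
            rw [hGhull]
            exact subset_convexHull ℝ _ (Finset.mem_coe.2 hw)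
          have := hcon w hwG
          have hcomm : (⟪w, v⟫ : ℝ) = ⟪v, w⟫ := real_inner_comm v w
          linarith
        show (0:ℝ) ≤ ⟪v, p⟫ - vSup Wg hWgne v
        linarith
      have hφvs : 0 ≤ φ vs := le_trans hφv (isMaxOn_iff.1 hvsmax v hvG)
      by_cases hvsrel : vs ∈ intrinsicInterior ℝ (maximizers K c)
      · -- optimality at interior maximum
        obtain ⟨hvsG', ρs, hρs, hchar⟩ := mem_intrinsicInterior_iff_ball.1 hvsrel
        set A := vArg Wg hWgne vs with hA
        have hAne : A.Nonempty := vArg_nonempty Wg hWgne vs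
        have hopt : ∀ mm : E d, mm ∈ (affineSpan ℝ (maximizers K c)).direction →
            (⟪p, mm⟫ : ℝ) ≤ A.sup' hAne (fun w => ⟪w, mm⟫) := by
          intro mm hmm
          obtain ⟨ε₁, hε₁, hkey⟩ := vArg_perturb Wg hWgne vs mm
          set ε := min ε₁ (ρs / (2 * ‖mm‖ + 2)) with hε
          have hε0 : 0 < ε := lt_min hε₁ (by positivity)
          have hmemG : vs + ε • mm ∈ maximizers K c := by
            have hspanmem : vs + ε • mm ∈ (affineSpan ℝ (maximizers K c) : Set (E d)) := by
              have h1 : ε • mm ∈ (affineSpan ℝ (maximizers K c)).direction :=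
                Submodule.smul_mem _ _ hmm
              have := AffineSubspace.vadd_mem_of_mem_direction h1
                (subset_affineSpan ℝ _ hvsG)
              simpa [vadd_eq_add, add_comm] using this
            refine hchar _ hspanmem ?_
            have hd : dist (vs + ε • mm) vs = ε * ‖mm‖ := by
              rw [dist_eq_norm, add_sub_cancel_left, norm_smul, Real.norm_eq_abs,
                abs_of_pos hε0]
            rw [hd]
            calc ε * ‖mm‖ ≤ ρs / (2 * ‖mm‖ + 2) * ‖mm‖ :=
                  mul_le_mul_of_nonneg_right (min_le_right _ _) (norm_nonneg _)
            _ < ρs := by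
                rw [div_mul_eq_mul_div, div_lt_iff₀ (by positivity)]
                nlinarith [norm_nonneg mm]
          have hle := isMaxOn_iff.1 hvsmax _ hmemG
          have hkey2 : vSup Wg hWgne (vs + ε • mm)
              = vSup Wg hWgne vs + ε * vSup A hAne mm := (hkey ε hε0 (min_le_left _ _)).2
          have hexp : φ (vs + ε • mm) = ⟪vs, p⟫ + ε * ⟪mm, p⟫
              - (vSup Wg hWgne vs + ε * vSup A hAne mm) := by
            show ⟪vs + ε • mm, p⟫ - vSup Wg hWgne (vs + ε • mm) = ⟪vs, p⟫ + ε * ⟪mm, p⟫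
              - (vSup Wg hWgne vs + ε * vSup A hAne mm)
            rw [inner_add_left, real_inner_smul_left, hkey2]
          have hφvs_eq : φ vs = ⟪vs, p⟫ - vSup Wg hWgne vs := rfl
          rw [hexp, hφvs_eq] at hle
          have h2 : ε * ⟪mm, p⟫ ≤ ε * vSup A hAne mm := by linarith
          have h3 : (⟪mm, p⟫ : ℝ) ≤ vSup A hAne mm := le_of_mul_le_mul_left (by linarith) hε0
          have hcomm : (⟪mm, p⟫ : ℝ) = ⟪p, mm⟫ := real_inner_comm p mm
          rw [← hcomm]
          exact h3
        obtain ⟨z, hzhull, hzperp⟩ := exists_proj_point hAne hopt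
        have hzG : z ∈ maximizers K c := by
          rw [hGhull]
          exact convexHull_mono (Finset.coe_subset.2 (vArg_subset Wg hWgne vs)) hzhull
        have hzval : (⟪z, vs⟫ : ℝ) = vSup Wg hWgne vs :=
          inner_eq_on_convexHull (fun w hw => (mem_vArg_iff.1 hw).2) hzhull
        have hdirmem : x₀ - vs ∈ (affineSpan ℝ (maximizers K c)).direction :=
          AffineSubspace.vsub_mem_direction (subset_affineSpan ℝ _ hx₀G)
            (subset_affineSpan ℝ _ hvsG)
        have hperp := hzperp _ hdirmem
        rw [inner_sub_left, inner_sub_right, inner_sub_right] at hperp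
        -- φ(vs) = ⟪vs, p - z⟫ ≥ 0 ; transfer to x₀
        have hφvs2 : φ vs = ⟪vs, p⟫ - ⟪vs, z⟫ := by
          have h0 : φ vs = ⟪vs, p⟫ - vSup Wg hWgne vs := rfl
          rw [h0, ← hzval, real_inner_comm vs z]
        have hx₀pz : (⟪x₀, p⟫ : ℝ) - ⟪x₀, z⟫ = ⟪vs, p⟫ - ⟪vs, z⟫ := by
          have e1 : (⟪p, x₀⟫ : ℝ) = ⟪x₀, p⟫ := real_inner_comm x₀ p
          have e2 : (⟪z, x₀⟫ : ℝ) = ⟪x₀, z⟫ := real_inner_comm x₀ z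
          have e3 : (⟪p, vs⟫ : ℝ) = ⟪vs, p⟫ := real_inner_comm vs p
          have e4 : (⟪z, vs⟫ : ℝ) = ⟪vs, z⟫ := real_inner_comm vs z
          linarith [hperp]
        have hzx₀ : (⟪z, x₀⟫ : ℝ) = ⟪x₀, x₀⟫ := hval0 z hzG
        have e2 : (⟪z, x₀⟫ : ℝ) = ⟪x₀, z⟫ := real_inner_comm x₀ z
        have e1 : (⟪p, x₀⟫ : ℝ) = ⟪x₀, p⟫ := real_inner_comm x₀ p
        have : (0:ℝ) ≤ ⟪x₀, p⟫ - ⟪x₀, z⟫ := by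
          rw [hx₀pz, ← hφvs2]
          exact hφvs
        linarith
      · -- boundary maximum: use the descend step at vs
        obtain ⟨g, hgG, hglt⟩ := hstep vs hvsG hvsrel
        have hgle : (⟪g, vs⟫ : ℝ) ≤ vSup Wg hWgne vs :=
          inner_le_vSup hWgne (hGhull ▸ hgG)
        have hcomm : (⟪g, vs⟫ : ℝ) = ⟪vs, g⟫ := real_inner_comm vs g
        have hφvs3 : (0:ℝ) ≤ ⟪vs, p⟫ - vSup Wg hWgne vs := hφvs
        linarith
    · exact hstep v hvG hvrel

lemma add_mem_intrinsicInterior_sum {A B : Set (E d)} (hA : Convex ℝ A) (hB : Convex ℝ B)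
    {x y : E d} (hx : x ∈ intrinsicInterior ℝ A) (hy : y ∈ intrinsicInterior ℝ B) :
    x + y ∈ intrinsicInterior ℝ (A + B) := by
  have hxA : x ∈ A := intrinsicInterior_subset hx
  have hyB : y ∈ B := intrinsicInterior_subset hy
  have hABconv : Convex ℝ (A + B) := hA.add hB
  have hxyAB : x + y ∈ A + B := Set.add_mem_add hxA hyB
  obtain ⟨x₀, hx₀⟩ := Set.Nonempty.intrinsicInterior hABconv ⟨_, hxyAB⟩
  obtain ⟨a, ha, b, hb, hab⟩ := intrinsicInterior_subset hx₀
  obtain ⟨ε₁, hε₁, h₁⟩ := exists_extension_of_mem_intrinsicInterior hx ha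
  obtain ⟨ε₂, hε₂, h₂⟩ := exists_extension_of_mem_intrinsicInterior hy hb
  set ε := min ε₁ ε₂ with hε
  have hε0 : 0 < ε := lt_min hε₁ hε₂
  refine mem_intrinsicInterior_of_extension hABconv hx₀ hxyAB ⟨ε, hε0, ?_⟩
  rw [← hab]
  have e : x + y + ε • (x + y - (a + b)) = (x + ε • (x - a)) + (y + ε • (y - b)) := by
    module
  rw [e]
  exact Set.add_mem_add (h₁ ε hε0 (min_le_left _ _)) (h₂ ε hε0 (min_le_right _ _))

theorem nesterov_rounding_perfectlyCentered {d : ℕ} (P : Set (E d))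
    (hP : IsPolytope P) (hfull : affineSpan ℝ P = ⊤)
    (hpc : IsPerfectlyCentered P) :
    IsPolytope (P + polarDual P) ∧
    affineSpan ℝ (P + polarDual P) = ⊤ ∧
    IsPerfectlyCentered (P + polarDual P) := by
  obtain ⟨V, hVne, hPV⟩ := hP
  have hPconv : Convex ℝ P := hPV ▸ convex_convexHull ℝ _
  have hPcomp : IsCompact P := hPV ▸ Set.Finite.isCompact_convexHull ℝ (Finset.finite_toSet V)
  have hPne : P.Nonempty := by
    obtain ⟨v₀, hv₀⟩ := hVne
    exact ⟨v₀, hPV ▸ subset_convexHull ℝ _ (Finset.mem_coe.2 hv₀)⟩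
  -- 0 is in the interior of P
  obtain ⟨c₀, hc₀rel, hc₀n⟩ := hpc P (Or.inr (Or.inl rfl)) hPne
  have hc₀0 : c₀ = 0 := by
    by_contra hne
    exact maximizers_ne_self hfull hPne hne hc₀n
  rw [hc₀0] at hc₀rel
  obtain ⟨h0P, ρP, hρP, hcharP⟩ := mem_intrinsicInterior_iff_ball.1 hc₀rel
  have hballP : Metric.ball (0:E d) ρP ⊆ P := by
    intro z hz
    refine hcharP z ?_ ?_
    · rw [hfull]
      exact AffineSubspace.mem_top ℝ (E d) z
    · rwa [Metric.mem_ball] at hz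
  set L := polarDual P with hLdef
  have hLconv : Convex ℝ L := polarDual_convex P
  have h0L : (0:E d) ∈ L := zero_mem_polarDual P
  have hLcomp : IsCompact L := polarDual_isCompact hρP hballP
  -- P is bounded
  obtain ⟨R₀, hR₀⟩ := hPcomp.isBounded.subset_closedBall 0
  set R := max R₀ 1 with hR
  have hRpos : (0:ℝ) < R := lt_of_lt_of_le one_pos (le_max_right _ _)
  have hPR : P ⊆ Metric.closedBall 0 R :=
    hR₀.trans (Metric.closedBall_subset_closedBall (le_max_left _ _))
  have hballL : Metric.ball (0:E d) (1/R) ⊆ L := ball_subset_polarDual hRpos hPR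
  have hρL : (0:ℝ) < 1/R := by positivity
  obtain ⟨VL, hVLne, hLVL⟩ := polarDual_isPolytope ⟨V, hVne, hPV⟩ hρP hballP
  have hbip : polarDual L = P := polarDual_polarDual hPconv hPcomp.isClosed h0P
  have hLne : L.Nonempty := ⟨0, h0L⟩
  -- pc data for P
  have hpcP : ∀ c : E d, c ≠ 0 →
      ∃ x, x ∈ intrinsicInterior ℝ (maximizers P c) ∧ maximizers P x = maximizers P c := by
    intro c hc
    obtain ⟨x, hx1, hx2⟩ := hpc (maximizers P c) (Or.inr (Or.inr ⟨c, hc, rfl⟩))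
      (maximizers_nonempty hPcomp hPne c)
    exact ⟨x, hx1, hx2⟩
  -- pc data for L
  have hpcL := pc_dual hPV hLVL hLdef hbip hfull hPne hρL hballL hpcP
  -- the key "chain" lemma
  have hstar : ∀ c : E d, c ≠ 0 → ∀ f ∈ maximizers P c, ∀ q ∈ maximizers L c,
      (⟪q, f⟫ : ℝ) = 1 := by
    intro c hc f hf q hq
    obtain ⟨y, hyrel, hymax⟩ := hpcL c hc
    have hyD : y ∈ maximizers L c := intrinsicInterior_subset hyrel
    -- positivity of the support value
    have hcn : 0 < ‖c‖ := norm_pos_iff.2 hc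
    have hzL : (1/R / 2) • (‖c‖⁻¹ • c) ∈ L := by
      apply hballL
      rw [Metric.mem_ball, dist_zero_right, norm_smul, norm_smul, norm_inv, norm_norm,
        Real.norm_eq_abs, abs_of_pos (by positivity : (0:ℝ) < 1/R/2),
        inv_mul_cancel₀ (ne_of_gt hcn)]
      rw [mul_one]
      linarith
    have hγ : 0 < (⟪y, c⟫ : ℝ) := by
      have h1 := hyD.2 _ hzL
      rw [real_inner_smul_left, real_inner_smul_left, real_inner_self_eq_norm_sq] at h1
      have h2 : (0:ℝ) < 1/R/2 * (‖c‖⁻¹ * ‖c‖ ^ 2) := by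
        have : ‖c‖⁻¹ * ‖c‖ ^ 2 = ‖c‖ := by field_simp [pow_two]
        rw [this]; positivity
      linarith
    have hy0 : y ≠ 0 := by
      intro h
      rw [h, inner_zero_left] at hγ
      exact lt_irrefl 0 hγ
    -- G = dual face of D
    have hGchar : maximizers P y = {p ∈ P | ∀ q' ∈ maximizers L c, ⟪q', p⟫ = 1} :=
      dual_face_of_relint hbip hLconv hyrel hγ
    set γ := (⟪y, c⟫ : ℝ) with hγdef
    -- w = γ⁻¹ c belongs to G
    have hwP : γ⁻¹ • c ∈ P := by
      rw [← hbip]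
      intro q' hq'
      rw [real_inner_smul_left, real_inner_comm q' c]
      have h1 : (⟪q', c⟫ : ℝ) ≤ γ := hyD.2 q' hq'
      rw [inv_mul_le_iff₀ hγ, mul_one]
      exact h1
    have hwG : γ⁻¹ • c ∈ maximizers P y := by
      rw [hGchar]
      refine ⟨hwP, fun q' hq' => ?_⟩
      have hq'val : (⟪q', c⟫ : ℝ) = γ :=
        le_antisymm (hyD.2 q' hq'.1) (hq'.2 y hyD.1)
      rw [real_inner_smul_right, hq'val, inv_mul_cancel₀ (ne_of_gt hγ)]
    -- f ∈ G via the zeta lemma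
    have hfG : f ∈ maximizers P y := by
      by_contra hfnot
      obtain ⟨g, hgG, hglt⟩ := zeta hVne hPV hfull hpcP
        (Module.finrank ℝ (affineSpan ℝ (maximizers P y)).direction) y hy0 le_rfl
        f hf.1 hfnot (γ⁻¹ • c) hwG
      -- hglt : ⟪γ⁻¹ • c, f⟫ < ⟪γ⁻¹ • c, g⟫
      rw [real_inner_smul_left, real_inner_smul_left] at hglt
      have h1 : (⟪g, c⟫ : ℝ) ≤ ⟪f, c⟫ := hf.2 g hgG.1
      have h2 : (⟪c, f⟫ : ℝ) = ⟪f, c⟫ := real_inner_comm f c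
      have h3 : (⟪c, g⟫ : ℝ) = ⟪g, c⟫ := real_inner_comm g c
      have h4 : (⟪c, f⟫ : ℝ) < ⟪c, g⟫ := lt_of_mul_lt_mul_left hglt (inv_pos.2 hγ).le
      linarith
    exact (hGchar ▸ hfG).2 q hq
  -- helper: equal values on a maximizer set
  have maximizers_inner_eq : ∀ {K : Set (E d)} {c a b : E d},
      a ∈ maximizers K c → b ∈ maximizers K c → (⟪a, c⟫ : ℝ) = ⟪b, c⟫ :=
    fun ha hb => le_antisymm (hb.2 _ ha.1) (ha.2 _ hb.1)
  set Q := P + L with hQdef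
  have hPQ : P ⊆ Q := by
    intro p hp
    have := Set.add_mem_add hp h0L
    rwa [add_zero] at this
  refine ⟨⟨V + VL, hVne.add hVLne, ?_⟩, ?_, ?_⟩
  · show P + L = convexHull ℝ ((V + VL : Finset (E d)) : Set (E d))
    rw [hPV, hLdef.trans hLVL, Finset.coe_add, convexHull_add]
  · apply le_antisymm le_top
    rw [← hfull]
    exact affineSpan_mono ℝ hPQ
  · intro H hHface hHne
    rcases hHface with rfl | rfl | ⟨c, hc, rfl⟩
    · simpa using hHne
    · refine ⟨0, ?_, ?_⟩
      · exact mem_intrinsicInterior_iff_ball.2 ⟨hPQ h0P, ρP, hρP, fun z hz hdist =>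
          hPQ (hballP (by rwa [Metric.mem_ball]))⟩
      · exact maximizers_zero Q
    · have hQsum : maximizers Q c = maximizers P c + maximizers L c := maximizers_add P L c
      obtain ⟨x, hxrel, hxmax⟩ := hpcP c hc
      obtain ⟨y, hyrel, hymax⟩ := hpcL c hc
      have hxF : x ∈ maximizers P c := intrinsicInterior_subset hxrel
      have hyD : y ∈ maximizers L c := intrinsicInterior_subset hyrel
      have hxmaxmem : x ∈ maximizers P x := hxmax.symm ▸ hxF
      have hymaxmem : y ∈ maximizers L y := hymax.symm ▸ hyD
      have hPle : ∀ z ∈ P, (⟪z, x⟫ : ℝ) ≤ ⟪x, x⟫ := fun z hz => hxmaxmem.2 z hz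
      have hLle : ∀ q ∈ L, (⟪q, y⟫ : ℝ) ≤ ⟪y, y⟫ := fun q hq => hymaxmem.2 q hq
      have hyx1 : (⟪y, x⟫ : ℝ) = 1 := hstar c hc x hxF y hyD
      have hFv : maximizers P (x + y) = maximizers P c := by
        apply Set.Subset.antisymm
        · rintro p' ⟨hp'P, hp'max⟩
          have hub : (⟪p', y⟫ : ℝ) ≤ 1 := by
            have h := hyD.1 p' hp'P
            have e : (⟪y, p'⟫ : ℝ) = ⟪p', y⟫ := real_inner_comm p' y
            linarith
          have hle := hp'max x hxF.1
          rw [inner_add_right, inner_add_right] at hle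
          have hxy : (⟪x, y⟫ : ℝ) = 1 := (real_inner_comm y x).symm ▸ hyx1
          have hp'x : (⟪p', x⟫ : ℝ) = ⟪x, x⟫ := by
            have h1 := hPle p' hp'P
            rw [hxy] at hle
            linarith
          rw [← hxmax]
          exact ⟨hp'P, fun z hz => by rw [hp'x]; exact hPle z hz⟩
        · intro p' hp'
          have hp'Px : p' ∈ maximizers P x := hxmax.symm ▸ hp'
          have hp'x : (⟪p', x⟫ : ℝ) = ⟪x, x⟫ := maximizers_inner_eq hp'Px hxmaxmem
          have hp'y : (⟪y, p'⟫ : ℝ) = 1 := hstar c hc p' hp' y hyD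
          refine ⟨hp'.1, fun z hz => ?_⟩
          rw [inner_add_right, inner_add_right, hp'x]
          have h1 := hPle z hz
          have h2 : (⟪z, y⟫ : ℝ) ≤ 1 := by
            have h := hyD.1 z hz
            have e : (⟪y, z⟫ : ℝ) = ⟪z, y⟫ := real_inner_comm z y
            linarith
          have h3 : (⟪p', y⟫ : ℝ) = 1 := (real_inner_comm p' y).symm.trans hp'y
          linarith
      have hDv : maximizers L (x + y) = maximizers L c := by
        apply Set.Subset.antisymm
        · rintro q' ⟨hq'L, hq'max⟩
          have hle := hq'max y hyD.1
          rw [inner_add_right, inner_add_right, hyx1] at hle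
          have h1 : (⟪q', x⟫ : ℝ) ≤ 1 := hq'L x hxF.1
          have h2 : (⟪q', y⟫ : ℝ) ≤ ⟪y, y⟫ := hLle q' hq'L
          have hq'y : (⟪q', y⟫ : ℝ) = ⟪y, y⟫ := by linarith
          rw [← hymax]
          exact ⟨hq'L, fun z hz => by rw [hq'y]; exact hLle z hz⟩
        · intro q' hq'
          have hq'Ly : q' ∈ maximizers L y := hymax.symm ▸ hq'
          have hq'y : (⟪q', y⟫ : ℝ) = ⟪y, y⟫ := maximizers_inner_eq hq'Ly hymaxmem
          have hq'x : (⟪q', x⟫ : ℝ) = 1 := hstar c hc x hxF q' hq'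
          refine ⟨hq'.1, fun z hz => ?_⟩
          rw [inner_add_right, inner_add_right, hq'x, hq'y]
          have h1 : (⟪z, x⟫ : ℝ) ≤ 1 := hz x hxF.1
          have h2 : (⟪z, y⟫ : ℝ) ≤ ⟪y, y⟫ := hLle z hz
          linarith
      have hsum2 : maximizers Q (x + y) = maximizers Q c := by
        rw [maximizers_add, maximizers_add, hFv, hDv]
      have hFconv : Convex ℝ (maximizers P c) := maximizers_convexSet hPconv c
      have hDconv : Convex ℝ (maximizers L c) := maximizers_convexSet hLconv c
      refine ⟨x + y, ?_, hsum2⟩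
      rw [hQsum]
      exact add_mem_intrinsicInterior_sum hFconv hDconv hxrel hyrel
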